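/- Let E be a finite row-finite directed graph, K a field, and A = L_K(E) or C_K(E) with its canonical ℤ-grading. If A is prime, then the degree-zero component of the center satisfies Z(A)_0 = K·1. Moreover, for any finite row-finite graph E, the degree-zero component Z(A)_0 of the center is finite-dimensional over K. -/

import Mathlib

/-! Basic infrastructure: directed graphs and their path algebras.

The path algebra `KE` is realized as the non-unital subalgebra generated by the
(images of the) vertices and edges inside the unital algebra `PA K E`, which is the
quotient of the free algebra on vertices and edges by the usual path-algebra
relations (vertices are orthogonal idempotents acting as local units on edges).
Words of composable edges are exactly the paths, so `KE` has the paths as a basis. -/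

/-- A directed graph `E = (E⁰, E¹, s, r)`. -/
structure DirGraph : Type 1 where
  V : Type
  Edge : Type
  s : Edge → V
  r : Edge → V

/-- A (non-unital, possibly non-closed) subset `S` of an algebra is *prime* if it is nonzero
and `a S b = 0` implies `a = 0` or `b = 0` for `a, b ∈ S`. -/
def IsPrimeSet {A : Type} [NonUnitalNonAssocSemiring A] (S : Set A) : Prop :=
  (∃ a ∈ S, a ≠ 0) ∧ ∀ a ∈ S, ∀ b ∈ S, (∀ x ∈ S, a * x * b = 0) → a = 0 ∨ b = 0

/-- `J` is a two-sided ideal of the (possibly non-unital) subalgebra with carrier `S`. -/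
def IsIdealOf (K : Type) [Field K] {A : Type} [Ring A] [Algebra K A] (S J : Set A) : Prop :=
  J ⊆ S ∧ (0 : A) ∈ J ∧ (∀ x ∈ J, ∀ y ∈ J, x + y ∈ J) ∧
    (∀ k : K, ∀ x ∈ J, k • x ∈ J) ∧ (∀ a ∈ S, ∀ x ∈ J, a * x ∈ J ∧ x * a ∈ J)

namespace DirGraph

/-- Generators of the path algebra: vertices and edges. -/
abbrev Gen (E : DirGraph) : Type := E.V ⊕ E.Edge

variable (K : Type) [Field K] (E : DirGraph)

/-- The defining relations of the path algebra: vertices are orthogonal idempotents,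
`s(e)·e = e`, `e·r(e) = e`, and all other vertex-edge products vanish. -/
inductive PathRel : FreeAlgebra K E.Gen → FreeAlgebra K E.Gen → Prop
  | vv_eq (u : E.V) :
      PathRel (FreeAlgebra.ι K (Sum.inl u) * FreeAlgebra.ι K (Sum.inl u))
        (FreeAlgebra.ι K (Sum.inl u))
  | vv_ne (u v : E.V) : u ≠ v →
      PathRel (FreeAlgebra.ι K (Sum.inl u) * FreeAlgebra.ι K (Sum.inl v)) 0
  | ve_eq (e : E.Edge) :
      PathRel (FreeAlgebra.ι K (Sum.inl (E.s e)) * FreeAlgebra.ι K (Sum.inr e))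
        (FreeAlgebra.ι K (Sum.inr e))
  | ve_ne (u : E.V) (e : E.Edge) : E.s e ≠ u →
      PathRel (FreeAlgebra.ι K (Sum.inl u) * FreeAlgebra.ι K (Sum.inr e)) 0
  | ev_eq (e : E.Edge) :
      PathRel (FreeAlgebra.ι K (Sum.inr e) * FreeAlgebra.ι K (Sum.inl (E.r e)))
        (FreeAlgebra.ι K (Sum.inr e))
  | ev_ne (e : E.Edge) (u : E.V) : E.r e ≠ u →
      PathRel (FreeAlgebra.ι K (Sum.inr e) * FreeAlgebra.ι K (Sum.inl u)) 0

/-- The ambient unital algebra (the unitalization of the path algebra). -/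
abbrev PA : Type := RingQuot (E.PathRel K)

/-- The image of a vertex in the path algebra. -/
noncomputable def vtx (u : E.V) : E.PA K :=
  RingQuot.mkAlgHom K (E.PathRel K) (FreeAlgebra.ι K (Sum.inl u))

/-- The image of an edge in the path algebra. -/
noncomputable def edg (e : E.Edge) : E.PA K :=
  RingQuot.mkAlgHom K (E.PathRel K) (FreeAlgebra.ι K (Sum.inr e))

/-- The path algebra `KE`: the (non-unital) subalgebra spanned by all paths, i.e.
generated by the vertices and edges. -/
noncomputable def KE : NonUnitalSubalgebra K (E.PA K) :=
  NonUnitalAlgebra.adjoin K (Set.range (E.vtx K) ∪ Set.range (E.edg K))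

/-- The center `Z(KE)` of the path algebra. -/
def relCenter : Set (E.PA K) :=
  {z | z ∈ E.KE K ∧ ∀ a ∈ E.KE K, a * z = z * a}

/-- `E.IsPathFrom u v l` : the list of edges `l` is a path from `u` to `v`
(`l = []` is the trivial path at `u = v`). -/
def IsPathFrom : E.V → E.V → List E.Edge → Prop
  | u, v, [] => u = v
  | u, v, e :: l => E.s e = u ∧ IsPathFrom (E.r e) v l

/-- The element of the path algebra corresponding to the path starting at `u`
with list of edges `l` (for `l = []` this is the vertex `u` itself). -/
noncomputable def pathElem (u : E.V) (l : List E.Edge) : E.PA K :=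
  E.vtx K u * (l.map (E.edg K)).prod

/-- The sum of all vertices: the unit of `KE` when `E⁰` is finite. -/
noncomputable def unitKE : E.PA K := ∑ᶠ u : E.V, E.vtx K u

/-- The scalar multiples `K·1` of the unit of `KE`. -/
noncomputable def scalarSet : Set (E.PA K) := Set.range fun k : K => k • E.unitKE K

/-- One step in the underlying undirected graph. -/
def Step (u v : E.V) : Prop :=
  (∃ e : E.Edge, E.s e = u ∧ E.r e = v) ∨ (∃ e : E.Edge, E.s e = v ∧ E.r e = u)

/-- `u ∼ v` : the vertices `u` and `v` are connected in the underlying undirected graph. -/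
def Connected (u v : E.V) : Prop := Relation.ReflTransGen E.Step u v

/-- The graph `E` is connected. -/
def IsConnectedGraph : Prop := ∀ u v : E.V, E.Connected u v

/-- The graph `E` is a cycle: `n ≥ 1` vertices `u₁, …, uₙ` and `n` edges `f₁, …, fₙ` with
`s(fᵢ) = uᵢ`, `r(fᵢ) = uᵢ₊₁` (indices mod `n`). -/
def IsCycleGraph : Prop :=
  ∃ n : ℕ, ∃ hn : 0 < n, ∃ (hv : Fin n ≃ E.V) (he : Fin n ≃ E.Edge),
    ∀ i : Fin n, E.s (he i) = hv i ∧ E.r (he i) = hv ⟨(i.1 + 1) % n, Nat.mod_lt _ hn⟩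

end DirGraph

namespace DirGraph

/-- The extended graph `Ê`: same vertices, edges `E¹ ⊕ (E¹)*`, where the ghost edge `e*`
(second component) has `s(e*) = r(e)` and `r(e*) = s(e)`. -/
def ext (E : DirGraph) : DirGraph where
  V := E.V
  Edge := E.Edge ⊕ E.Edge
  s := Sum.elim E.s E.r
  r := Sum.elim E.r E.s

variable (K : Type) [Field K] (E : DirGraph)

/-- Defining relations of the Cohn (`t = false`) and Leavitt (`t = true`) path algebras:
the path-algebra relations of the extended graph, the relations (CK1)
`e*e' = δ_{e,e'} r(e)`, and — only for `t = true` — the relations (CK2)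
`v = Σ_{s(e)=v} ee*` at every regular vertex `v`. -/
inductive CLRel : Bool → FreeAlgebra K E.ext.Gen → FreeAlgebra K E.ext.Gen → Prop
  | base (t : Bool) {a b : FreeAlgebra K E.ext.Gen} : E.ext.PathRel K a b → CLRel t a b
  | ck1_eq (t : Bool) (e : E.Edge) :
      CLRel t (FreeAlgebra.ι K (Sum.inr (Sum.inr e)) * FreeAlgebra.ι K (Sum.inr (Sum.inl e)))
        (FreeAlgebra.ι K (Sum.inl (E.r e)))
  | ck1_ne (t : Bool) (e f : E.Edge) : e ≠ f →
      CLRel t (FreeAlgebra.ι K (Sum.inr (Sum.inr e)) * FreeAlgebra.ι K (Sum.inr (Sum.inl f))) 0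
  | ck2 (v : E.V) (h : {e : E.Edge | E.s e = v}.Finite)
      (hne : {e : E.Edge | E.s e = v}.Nonempty) :
      CLRel true (FreeAlgebra.ι K (Sum.inl v))
        (h.toFinset.sum fun e =>
          FreeAlgebra.ι K (Sum.inr (Sum.inl e)) * FreeAlgebra.ι K (Sum.inr (Sum.inr e)))

/-- The ambient unital algebra containing the Cohn (`t = false`) or
Leavitt (`t = true`) path algebra. -/
abbrev CL (t : Bool) : Type := RingQuot (E.CLRel K t)

/-- The image of a vertex in `C_K(E)` / `L_K(E)`. -/
noncomputable def clvtx (t : Bool) (u : E.V) : E.CL K t :=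
  RingQuot.mkAlgHom K (E.CLRel K t) (FreeAlgebra.ι K (Sum.inl u))

/-- The image of a (real) edge in `C_K(E)` / `L_K(E)`. -/
noncomputable def cledg (t : Bool) (e : E.Edge) : E.CL K t :=
  RingQuot.mkAlgHom K (E.CLRel K t) (FreeAlgebra.ι K (Sum.inr (Sum.inl e)))

/-- The image of a ghost edge `e*` in `C_K(E)` / `L_K(E)`. -/
noncomputable def clghost (t : Bool) (e : E.Edge) : E.CL K t :=
  RingQuot.mkAlgHom K (E.CLRel K t) (FreeAlgebra.ι K (Sum.inr (Sum.inr e)))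

/-- The Cohn path algebra `C_K(E)` (`t = false`) or Leavitt path algebra `L_K(E)`
(`t = true`): the non-unital subalgebra generated by vertices, edges, and ghost edges. -/
noncomputable def clSub (t : Bool) : NonUnitalSubalgebra K (E.CL K t) :=
  NonUnitalAlgebra.adjoin K
    (Set.range (E.clvtx K t) ∪ Set.range (E.cledg K t) ∪ Set.range (E.clghost K t))

/-- The center of `C_K(E)` (`t = false`) or of `L_K(E)` (`t = true`). -/
def clCenter (t : Bool) : Set (E.CL K t) :=
  {z | z ∈ E.clSub K t ∧ ∀ a ∈ E.clSub K t, a * z = z * a}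

/-- The element `μ` of `C_K(E)` / `L_K(E)` for the path `μ` starting at `u` with edges `l`. -/
noncomputable def clPath (t : Bool) (u : E.V) (l : List E.Edge) : E.CL K t :=
  E.clvtx K t u * (l.map (E.cledg K t)).prod

/-- The element `μ*` of `C_K(E)` / `L_K(E)` for the path `μ` starting at `u` with edges `l`. -/
noncomputable def clPathStar (t : Bool) (u : E.V) (l : List E.Edge) : E.CL K t :=
  ((l.map (E.clghost K t)).reverse).prod * E.clvtx K t u

/-- The sum of all vertices: the unit of `C_K(E)` / `L_K(E)` when `E⁰` is finite. -/
noncomputable def clOne (t : Bool) : E.CL K t := ∑ᶠ u : E.V, E.clvtx K t u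

/-- The degree-zero component (w.r.t. the canonical ℤ-grading) of `C_K(E)` / `L_K(E)`:
the span of the elements `στ*` with `σ, τ` paths of equal length and common range. -/
def clDeg0 (t : Bool) : Submodule K (E.CL K t) :=
  Submodule.span K {x : E.CL K t | ∃ (u w v : E.V) (l m : List E.Edge),
    E.IsPathFrom u v l ∧ E.IsPathFrom w v m ∧ l.length = m.length ∧
    x = E.clPath K t u l * E.clPathStar K t w m}

/-- The span of the symmetric elements `μμ*`, `μ` a path of `E`. -/
def clSymmSpan (t : Bool) : Submodule K (E.CL K t) :=
  Submodule.span K {x : E.CL K t | ∃ (u v : E.V) (l : List E.Edge),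
    E.IsPathFrom u v l ∧ x = E.clPath K t u l * E.clPathStar K t u l}

/-- A subset `H ⊆ E⁰` is hereditary if paths starting in `H` end in `H`. -/
def Hereditary (H : Set E.V) : Prop :=
  ∀ (u v : E.V) (l : List E.Edge), E.IsPathFrom u v l → u ∈ H → v ∈ H

/-- The two-sided ideal of `C_K(E)` / `L_K(E)` generated by a subset `S₀`. -/
def clIdealGen (t : Bool) (S₀ : Set (E.CL K t)) : Set (E.CL K t) :=
  ⋂₀ {J : Set (E.CL K t) | IsIdealOf K (E.clSub K t : Set (E.CL K t)) J ∧ S₀ ⊆ J}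

/-- `c` is a cycle based at `u`: a nontrivial closed path visiting no vertex twice. -/
def IsCycle (u : E.V) (l : List E.Edge) : Prop :=
  l ≠ [] ∧ E.IsPathFrom u u l ∧ (l.map E.s).Nodup

/-- The (closed) path `l` has an exit. -/
def HasExit (l : List E.Edge) : Prop :=
  ∃ f : E.Edge, ∃ e ∈ l, E.s f = E.s e ∧ f ≠ e

/-- Condition (L): every cycle of `E` has an exit. -/
def CondL : Prop := ∀ (u : E.V) (l : List E.Edge), E.IsCycle u l → E.HasExit l

/-- The set of paths (given by their source and list of edges) that end at a vertex of the
cycle `c` and do not contain all the edges of `c`. -/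
def endsAtNotContaining (c : List E.Edge) : Set (E.V × List E.Edge) :=
  {p | (∃ v : E.V, (∃ e ∈ c, E.s e = v) ∧ E.IsPathFrom p.1 v p.2) ∧ ∃ e ∈ c, e ∉ p.2}

/-- `c` is the unique cycle of `E` without exits (uniqueness as a cycle: any cycle
without exits has the same edges as `c`). -/
def UniqueNoExitCycle (c : List E.Edge) : Prop :=
  (∃ u : E.V, E.IsCycle u c ∧ ¬ E.HasExit c) ∧
    ∀ (u' : E.V) (c' : List E.Edge), E.IsCycle u' c' → ¬ E.HasExit c' →
      ∀ e : E.Edge, e ∈ c' ↔ e ∈ c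

end DirGraph

namespace DirGraph

open scoped Classical

section Dev

variable {K : Type} [Field K] {E : DirGraph} {t : Bool}

/-! ### Basic relation lemmas -/

private lemma clrel {a b : FreeAlgebra K E.ext.Gen} (h : E.CLRel K t a b) :
    RingQuot.mkAlgHom K (E.CLRel K t) a = RingQuot.mkAlgHom K (E.CLRel K t) b :=
  RingQuot.mkAlgHom_rel K h

private lemma clrel0 {a : FreeAlgebra K E.ext.Gen} (h : E.CLRel K t a 0) :
    RingQuot.mkAlgHom K (E.CLRel K t) a = 0 := by
  rw [clrel h, map_zero]

lemma vtx_mul_vtx (u w : E.V) :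
    E.clvtx K t u * E.clvtx K t w = if u = w then E.clvtx K t u else 0 := by
  rw [clvtx, clvtx, ← map_mul]
  split_ifs with h
  · subst h; exact clrel (CLRel.base t (PathRel.vv_eq (K := K) (E := E.ext) u))
  · exact clrel0 (CLRel.base t (PathRel.vv_ne (K := K) (E := E.ext) u w h))

lemma vtx_mul_edg (u : E.V) (e : E.Edge) :
    E.clvtx K t u * E.cledg K t e = if u = E.s e then E.cledg K t e else 0 := by
  rw [clvtx, cledg, ← map_mul]
  split_ifs with h
  · subst h; exact clrel (CLRel.base t (PathRel.ve_eq (K := K) (E := E.ext) (Sum.inl e)))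
  · exact clrel0 (CLRel.base t (PathRel.ve_ne (K := K) (E := E.ext) u (Sum.inl e) (fun hh => h hh.symm)))

lemma edg_mul_vtx (e : E.Edge) (u : E.V) :
    E.cledg K t e * E.clvtx K t u = if u = E.r e then E.cledg K t e else 0 := by
  rw [clvtx, cledg, ← map_mul]
  split_ifs with h
  · subst h; exact clrel (CLRel.base t (PathRel.ev_eq (K := K) (E := E.ext) (Sum.inl e)))
  · exact clrel0 (CLRel.base t (PathRel.ev_ne (K := K) (E := E.ext) (Sum.inl e) u (fun hh => h hh.symm)))

lemma vtx_mul_gh (u : E.V) (e : E.Edge) :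
    E.clvtx K t u * E.clghost K t e = if u = E.r e then E.clghost K t e else 0 := by
  rw [clvtx, clghost, ← map_mul]
  split_ifs with h
  · subst h; exact clrel (CLRel.base t (PathRel.ve_eq (K := K) (E := E.ext) (Sum.inr e)))
  · exact clrel0 (CLRel.base t (PathRel.ve_ne (K := K) (E := E.ext) u (Sum.inr e) (fun hh => h hh.symm)))

lemma gh_mul_vtx (e : E.Edge) (u : E.V) :
    E.clghost K t e * E.clvtx K t u = if u = E.s e then E.clghost K t e else 0 := by
  rw [clvtx, clghost, ← map_mul]
  split_ifs with h
  · subst h; exact clrel (CLRel.base t (PathRel.ev_eq (K := K) (E := E.ext) (Sum.inr e)))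
  · exact clrel0 (CLRel.base t (PathRel.ev_ne (K := K) (E := E.ext) (Sum.inr e) u (fun hh => h hh.symm)))

lemma gh_mul_edg (e f : E.Edge) :
    E.clghost K t e * E.cledg K t f = if e = f then E.clvtx K t (E.r e) else 0 := by
  rw [clvtx, cledg, clghost, ← map_mul]
  split_ifs with h
  · subst h; exact clrel (CLRel.ck1_eq t e)
  · exact clrel0 (CLRel.ck1_ne t e f h)


/-! ### Membership lemmas -/

lemma vtx_mem (u : E.V) : E.clvtx K t u ∈ E.clSub K t := by
  apply NonUnitalAlgebra.subset_adjoin K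
  left; left; exact ⟨u, rfl⟩

lemma edg_mem (e : E.Edge) : E.cledg K t e ∈ E.clSub K t := by
  apply NonUnitalAlgebra.subset_adjoin K
  left; right; exact ⟨e, rfl⟩

lemma gh_mem (e : E.Edge) : E.clghost K t e ∈ E.clSub K t := by
  apply NonUnitalAlgebra.subset_adjoin K
  right; exact ⟨e, rfl⟩

/-! ### IsPathFrom lemmas -/

lemma isPathFrom_nil {u v : E.V} : E.IsPathFrom u v [] ↔ u = v := Iff.rfl

lemma isPathFrom_cons {u v : E.V} {e : E.Edge} {l : List E.Edge} :
    E.IsPathFrom u v (e :: l) ↔ E.s e = u ∧ E.IsPathFrom (E.r e) v l := Iff.rfl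

lemma isPathFrom_append {u v w : E.V} {l m : List E.Edge}
    (h1 : E.IsPathFrom u v l) (h2 : E.IsPathFrom v w m) : E.IsPathFrom u w (l ++ m) := by
  induction l generalizing u with
  | nil => rw [isPathFrom_nil] at h1; subst h1; exact h2
  | cons e l ih => exact ⟨h1.1, ih h1.2⟩

lemma isPathFrom_unique {u v v' : E.V} {l : List E.Edge}
    (h1 : E.IsPathFrom u v l) (h2 : E.IsPathFrom u v' l) : v = v' := by
  induction l generalizing u with
  | nil => rw [isPathFrom_nil] at h1 h2; exact h1.symm.trans h2
  | cons e l ih => exact ih h1.2 h2.2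

lemma isPathFrom_split {u w : E.V} {l m : List E.Edge} (h : E.IsPathFrom u w (l ++ m)) :
    ∃ v, E.IsPathFrom u v l ∧ E.IsPathFrom v w m := by
  induction l generalizing u with
  | nil => exact ⟨u, rfl, h⟩
  | cons e l ih =>
    obtain ⟨x, hx1, hx2⟩ := ih h.2
    exact ⟨x, ⟨h.1, hx1⟩, hx2⟩

/-! ### Path element lemmas -/

lemma clPath_nil (u : E.V) : E.clPath K t u [] = E.clvtx K t u := by
  simp [clPath]

lemma clPathStar_nil (u : E.V) : E.clPathStar K t u [] = E.clvtx K t u := by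
  simp [clPathStar]

lemma clPath_cons {e : E.Edge} {u : E.V} (h : E.s e = u) (l : List E.Edge) :
    E.clPath K t u (e :: l) = E.cledg K t e * E.clPath K t (E.r e) l := by
  subst h
  rw [clPath, clPath, List.map_cons, List.prod_cons, ← mul_assoc, vtx_mul_edg, if_pos rfl,
    ← mul_assoc, edg_mul_vtx, if_pos rfl]

lemma clPathStar_cons {e : E.Edge} {u : E.V} (h : E.s e = u) (l : List E.Edge) :
    E.clPathStar K t u (e :: l) = E.clPathStar K t (E.r e) l * E.clghost K t e := by
  subst h
  rw [clPathStar, clPathStar, List.map_cons, List.reverse_cons, List.prod_append,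
    List.prod_cons, List.prod_nil, mul_one, mul_assoc, mul_assoc, gh_mul_vtx, if_pos rfl,
    vtx_mul_gh, if_pos rfl]

lemma vtx_mul_clPath (w u : E.V) (l : List E.Edge) :
    E.clvtx K t w * E.clPath K t u l = if w = u then E.clPath K t u l else 0 := by
  rw [clPath, ← mul_assoc, vtx_mul_vtx]
  by_cases h : w = u
  · subst h; rw [if_pos rfl, if_pos rfl]
  · rw [if_neg h, if_neg h, zero_mul]

lemma clPathStar_mul_vtx (u : E.V) (l : List E.Edge) (w : E.V) :
    E.clPathStar K t u l * E.clvtx K t w = if w = u then E.clPathStar K t u l else 0 := by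
  rw [clPathStar, mul_assoc, vtx_mul_vtx]
  by_cases h : w = u
  · subst h; rw [if_pos rfl, if_pos rfl, ← clPathStar]
  · rw [if_neg (fun hh => h hh.symm), if_neg h, mul_zero]

lemma clPath_mul_vtx {u v : E.V} {l : List E.Edge} (h : E.IsPathFrom u v l) (w : E.V) :
    E.clPath K t u l * E.clvtx K t w = if w = v then E.clPath K t u l else 0 := by
  induction l generalizing u with
  | nil =>
    rw [isPathFrom_nil] at h; subst h
    rw [clPath_nil, vtx_mul_vtx]
    by_cases hh : w = u
    · subst hh; rw [if_pos rfl]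
    · rw [if_neg (fun hhh => hh hhh.symm), if_neg hh]
  | cons e l ih =>
    rw [clPath_cons h.1, mul_assoc, ih h.2]
    split_ifs
    · rfl
    · rw [mul_zero]

lemma vtx_mul_clPathStar {u v : E.V} {l : List E.Edge} (h : E.IsPathFrom u v l) (w : E.V) :
    E.clvtx K t w * E.clPathStar K t u l = if w = v then E.clPathStar K t u l else 0 := by
  induction l generalizing u with
  | nil =>
    rw [isPathFrom_nil] at h; subst h
    rw [clPathStar_nil, vtx_mul_vtx]
    split_ifs with hh
    · rw [hh]
    · rfl
  | cons e l ih =>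
    rw [clPathStar_cons h.1, ← mul_assoc, ih h.2]
    split_ifs
    · rfl
    · rw [zero_mul]

lemma star_mul_path_self {u v : E.V} {l : List E.Edge} (h : E.IsPathFrom u v l) :
    E.clPathStar K t u l * E.clPath K t u l = E.clvtx K t v := by
  induction l generalizing u with
  | nil =>
    rw [isPathFrom_nil] at h; subst h
    rw [clPathStar_nil, clPath_nil, vtx_mul_vtx, if_pos rfl]
  | cons e l ih =>
    rw [clPathStar_cons h.1, clPath_cons h.1, mul_assoc, ← mul_assoc (E.clghost K t e),
      gh_mul_edg, if_pos rfl, vtx_mul_clPath, if_pos rfl, ih h.2]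

lemma clPath_append {u v w : E.V} {l m : List E.Edge}
    (h1 : E.IsPathFrom u v l) (h2 : E.IsPathFrom v w m) :
    E.clPath K t u (l ++ m) = E.clPath K t u l * E.clPath K t v m := by
  induction l generalizing u with
  | nil =>
    rw [isPathFrom_nil] at h1; subst h1
    rw [List.nil_append, clPath_nil, vtx_mul_clPath, if_pos rfl]
  | cons e l ih =>
    rw [List.cons_append, clPath_cons h1.1, clPath_cons h1.1, ih h1.2, mul_assoc]

lemma clPathStar_append {u v w : E.V} {l m : List E.Edge}
    (h1 : E.IsPathFrom u v l) (h2 : E.IsPathFrom v w m) :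
    E.clPathStar K t u (l ++ m) = E.clPathStar K t v m * E.clPathStar K t u l := by
  induction l generalizing u with
  | nil =>
    rw [isPathFrom_nil] at h1; subst h1
    rw [List.nil_append, clPathStar_nil, clPathStar_mul_vtx, if_pos rfl]
  | cons e l ih =>
    rw [List.cons_append, clPathStar_cons h1.1, clPathStar_cons h1.1, ih h1.2, mul_assoc]

lemma clPath_mem {u v : E.V} {l : List E.Edge} (h : E.IsPathFrom u v l) :
    E.clPath K t u l ∈ E.clSub K t := by
  induction l generalizing u with
  | nil => rw [clPath_nil]; exact vtx_mem u
  | cons e l ih => rw [clPath_cons h.1]; exact mul_mem (edg_mem e) (ih h.2)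

lemma clPathStar_mem {u v : E.V} {l : List E.Edge} (h : E.IsPathFrom u v l) :
    E.clPathStar K t u l ∈ E.clSub K t := by
  induction l generalizing u with
  | nil => rw [clPathStar_nil]; exact vtx_mem u
  | cons e l ih => rw [clPathStar_cons h.1]; exact mul_mem (ih h.2) (gh_mem e)

/-! ### The collapse lemma -/

lemma star_mul_path {w v u v' : E.V} {m l : List E.Edge}
    (hm : E.IsPathFrom w v m) (hl : E.IsPathFrom u v' l) :
    (u = w ∧ ∃ l₂, l = m ++ l₂ ∧ E.IsPathFrom v v' l₂ ∧
       E.clPathStar K t w m * E.clPath K t u l = E.clPath K t v l₂) ∨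
    (u = w ∧ ∃ m₂, m = l ++ m₂ ∧ E.IsPathFrom v' v m₂ ∧
       E.clPathStar K t w m * E.clPath K t u l = E.clPathStar K t v' m₂) ∨
    E.clPathStar K t w m * E.clPath K t u l = 0 := by
  induction m generalizing l u w v' with
  | nil =>
    rw [isPathFrom_nil] at hm; subst hm
    by_cases h : u = w
    · subst h
      exact Or.inl ⟨rfl, l, rfl, hl, by rw [clPathStar_nil, vtx_mul_clPath, if_pos rfl]⟩
    · exact Or.inr (Or.inr (by
        rw [clPathStar_nil, vtx_mul_clPath, if_neg (fun hh => h hh.symm)]))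
  | cons e m' ih =>
    obtain ⟨he, hm'⟩ := hm
    rw [clPathStar_cons he]
    cases l with
    | nil =>
      rw [isPathFrom_nil] at hl; subst hl
      by_cases h : u = w
      · subst h
        right; left
        refine ⟨rfl, e :: m', rfl, ⟨he, hm'⟩, ?_⟩
        rw [clPath_nil, mul_assoc, gh_mul_vtx, if_pos he.symm, ← clPathStar_cons he]
      · right; right
        rw [clPath_nil, mul_assoc, gh_mul_vtx, if_neg (fun hh => h (hh.trans he)), mul_zero]
    | cons f l' =>
      obtain ⟨hf, hl'⟩ := hl
      rw [clPath_cons hf]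
      by_cases hef : e = f
      · subst hef
        have key : E.clPathStar K t (E.r e) m' * E.clghost K t e *
            (E.cledg K t e * E.clPath K t (E.r e) l') =
            E.clPathStar K t (E.r e) m' * E.clPath K t (E.r e) l' := by
          rw [mul_assoc, ← mul_assoc (E.clghost K t e), gh_mul_edg, if_pos rfl,
            vtx_mul_clPath, if_pos rfl]
        rw [key]
        have huw : u = w := hf.symm.trans he
        rcases ih hm' hl' with ⟨_, l₂, h1, h2, h3⟩ | ⟨_, m₂, h1, h2, h3⟩ | h0
        · left
          exact ⟨huw, l₂, by rw [h1, List.cons_append], h2, h3⟩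
        · right; left
          exact ⟨huw, m₂, by rw [h1, List.cons_append], h2, h3⟩
        · right; right; exact h0
      · right; right
        rw [mul_assoc, ← mul_assoc (E.clghost K t e), gh_mul_edg, if_neg hef, zero_mul,
          mul_zero]

lemma star_mul_path_eqlen {w v u v' : E.V} {m l : List E.Edge}
    (hm : E.IsPathFrom w v m) (hl : E.IsPathFrom u v' l) (hlen : l.length = m.length) :
    (u = w ∧ l = m ∧ v' = v ∧
      E.clPathStar K t w m * E.clPath K t u l = E.clvtx K t v) ∨
    E.clPathStar K t w m * E.clPath K t u l = 0 := by
  rcases star_mul_path (K := K) (t := t) hm hl with ⟨hu, l₂, h1, h2, h3⟩ | ⟨hu, m₂, h1, h2, h3⟩ | h0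
  · have hnil : l₂ = [] := by
      have := congrArg List.length h1
      rw [List.length_append] at this
      rw [hlen] at this
      exact List.eq_nil_of_length_eq_zero (by omega)
    subst hnil
    rw [isPathFrom_nil] at h2
    left
    refine ⟨hu, by rw [h1, List.append_nil], h2.symm, ?_⟩
    rw [h3, clPath_nil, h2]
  · have hnil : m₂ = [] := by
      have := congrArg List.length h1
      rw [List.length_append] at this
      rw [hlen] at this
      exact List.eq_nil_of_length_eq_zero (by omega)
    subst hnil
    rw [isPathFrom_nil] at h2
    left
    refine ⟨hu, by rw [h1, List.append_nil], h2, ?_⟩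
    rw [h3, clPathStar_nil, h2]
  · right; exact h0


/-! ### The unit of `clSub` -/

section Unit

variable [Fintype E.V]

lemma clOne_eq : E.clOne K t = ∑ u : E.V, E.clvtx K t u := by
  rw [clOne, finsum_eq_sum_of_fintype]

lemma mul_clOne_of {x : E.CL K t} (u : E.V)
    (hx : ∀ w, x * E.clvtx K t w = if w = u then x else 0) : x * E.clOne K t = x := by
  rw [clOne_eq, Finset.mul_sum, Finset.sum_congr rfl (fun w _ => hx w)]
  simp

lemma clOne_mul_of {x : E.CL K t} (u : E.V)
    (hx : ∀ w, E.clvtx K t w * x = if w = u then x else 0) : E.clOne K t * x = x := by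
  rw [clOne_eq, Finset.sum_mul, Finset.sum_congr rfl (fun w _ => hx w)]
  simp

lemma mul_clOne {a : E.CL K t} (ha : a ∈ E.clSub K t) :
    a * E.clOne K t = a ∧ E.clOne K t * a = a := by
  refine NonUnitalAlgebra.adjoin_induction ?_ ?_ ?_ ?_ ?_ ha
  · rintro x ((⟨u, rfl⟩ | ⟨e, rfl⟩) | ⟨e, rfl⟩)
    · constructor
      · refine mul_clOne_of u (fun w => ?_)
        rw [vtx_mul_vtx]
        by_cases h : u = w
        · subst h; rw [if_pos rfl]
        · rw [if_neg h, if_neg (fun hh => h hh.symm)]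
      · refine clOne_mul_of u (fun w => ?_)
        rw [vtx_mul_vtx]
        by_cases h : w = u
        · subst h; rw [if_pos rfl]
        · rw [if_neg h, if_neg h]
    · exact ⟨mul_clOne_of (E.r e) (fun w => edg_mul_vtx e w),
        clOne_mul_of (E.s e) (fun w => vtx_mul_edg w e)⟩
    · exact ⟨mul_clOne_of (E.s e) (fun w => gh_mul_vtx e w),
        clOne_mul_of (E.r e) (fun w => vtx_mul_gh w e)⟩
  · intro x y _ _ hx hy
    exact ⟨by rw [add_mul, hx.1, hy.1], by rw [mul_add, hx.2, hy.2]⟩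
  · exact ⟨zero_mul _, mul_zero _⟩
  · intro x y _ _ hx hy
    exact ⟨by rw [mul_assoc, hy.1], by rw [← mul_assoc, hx.2]⟩
  · intro r x _ hx
    exact ⟨by rw [smul_mul_assoc, hx.1], by rw [mul_smul_comm, hx.2]⟩

lemma clOne_mem : E.clOne K t ∈ E.clSub K t := by
  rw [clOne_eq]
  exact sum_mem (fun u _ => vtx_mem u)

end Unit

/-! ### The spanning set `στ*` -/

variable (K E t) in
def wSet : Set (E.CL K t) :=
  {x | ∃ (u w v : E.V) (l m : List E.Edge),
    E.IsPathFrom u v l ∧ E.IsPathFrom w v m ∧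
    x = E.clPath K t u l * E.clPathStar K t w m}

lemma wSet_mul {x y : E.CL K t} (hx : x ∈ wSet K E t) (hy : y ∈ wSet K E t) :
    x * y ∈ Submodule.span K (wSet K E t) := by
  obtain ⟨u, w, v, l, m, hl, hm, rfl⟩ := hx
  obtain ⟨u', w', v₂, l', m', hl', hm', rfl⟩ := hy
  have assoc : E.clPath K t u l * E.clPathStar K t w m *
      (E.clPath K t u' l' * E.clPathStar K t w' m') =
      E.clPath K t u l * ((E.clPathStar K t w m * E.clPath K t u' l') *
        E.clPathStar K t w' m') := by
    rw [mul_assoc, ← mul_assoc (E.clPathStar K t w m)]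
  rw [assoc]
  rcases star_mul_path (K := K) (t := t) hm hl' with
    ⟨huw, l₂, hL, hp2, heq⟩ | ⟨huw, m₂, hM, hp2, heq⟩ | h0
  · rw [heq, ← mul_assoc, ← clPath_append hl hp2]
    exact Submodule.subset_span
      ⟨u, w', v₂, l ++ l₂, m', isPathFrom_append hl hp2, hm', rfl⟩
  · rw [heq, ← clPathStar_append hm' hp2]
    exact Submodule.subset_span
      ⟨u, w', v, l, m' ++ m₂, hl, isPathFrom_append hm' hp2, rfl⟩
  · rw [h0, zero_mul, mul_zero]
    exact zero_mem _

lemma span_wSet_mul {x y : E.CL K t} (hx : x ∈ Submodule.span K (wSet K E t))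
    (hy : y ∈ Submodule.span K (wSet K E t)) :
    x * y ∈ Submodule.span K (wSet K E t) := by
  refine Submodule.span_induction
    (p := fun a _ => ∀ y' ∈ Submodule.span K (wSet K E t),
      a * y' ∈ Submodule.span K (wSet K E t)) ?_ ?_ ?_ ?_ hx y hy
  · intro a haW y' hy'
    refine Submodule.span_induction
      (p := fun b _ => a * b ∈ Submodule.span K (wSet K E t)) ?_ ?_ ?_ ?_ hy'
    · intro b hbW; exact wSet_mul haW hbW
    · show a * 0 ∈ _
      rw [mul_zero]; exact zero_mem _
    · intro b c _ _ hb hc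
      show a * (b + c) ∈ _
      rw [mul_add]; exact add_mem hb hc
    · intro r b _ hb
      show a * (r • b) ∈ _
      rw [mul_smul_comm]; exact Submodule.smul_mem _ _ hb
  · intro y' _; rw [zero_mul]; exact zero_mem _
  · intro a b _ _ ha hb y' hy'; rw [add_mul]; exact add_mem (ha y' hy') (hb y' hy')
  · intro r a _ ha y' hy'; rw [smul_mul_assoc]; exact Submodule.smul_mem _ _ (ha y' hy')

lemma mem_span_wSet {a : E.CL K t} (ha : a ∈ E.clSub K t) :
    a ∈ Submodule.span K (wSet K E t) := by
  refine NonUnitalAlgebra.adjoin_induction ?_ ?_ ?_ ?_ ?_ ha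
  · rintro x ((⟨u, rfl⟩ | ⟨e, rfl⟩) | ⟨e, rfl⟩)
    · refine Submodule.subset_span ⟨u, u, u, [], [], rfl, rfl, ?_⟩
      rw [clPath_nil, clPathStar_nil, vtx_mul_vtx, if_pos rfl]
    · refine Submodule.subset_span ⟨E.s e, E.r e, E.r e, [e], [], ⟨rfl, rfl⟩, rfl, ?_⟩
      rw [clPathStar_nil, clPath_cons rfl, clPath_nil, mul_assoc, vtx_mul_vtx, if_pos rfl,
        edg_mul_vtx, if_pos rfl]
    · refine Submodule.subset_span ⟨E.r e, E.s e, E.r e, [], [e], rfl, ⟨rfl, rfl⟩, ?_⟩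
      rw [clPathStar_cons rfl, clPathStar_nil, clPath_nil, ← mul_assoc, vtx_mul_vtx,
        if_pos rfl, vtx_mul_gh, if_pos rfl]
  · intro x y _ _ hx hy; exact add_mem hx hy
  · exact zero_mem _
  · intro x y _ _ hx hy; exact span_wSet_mul hx hy
  · intro r x _ hx; exact Submodule.smul_mem _ _ hx

/-! ### The `q` idempotents -/

variable (K t) in
noncomputable def qElem (E : DirGraph) (v : E.V) (h : {e : E.Edge | E.s e = v}.Finite) :
    E.CL K t :=
  E.clvtx K t v - ∑ e ∈ h.toFinset, E.cledg K t e * E.clghost K t e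

lemma qElem_mem {v : E.V} (h : {e : E.Edge | E.s e = v}.Finite) :
    qElem K t E v h ∈ E.clSub K t :=
  sub_mem (vtx_mem v) (sum_mem (fun e _ => mul_mem (edg_mem e) (gh_mem e)))

lemma q_mul_vtx {v : E.V} (h : {e : E.Edge | E.s e = v}.Finite) (u : E.V) :
    qElem K t E v h * E.clvtx K t u = if u = v then qElem K t E v h else 0 := by
  by_cases hu : u = v
  · subst hu
    rw [if_pos rfl, qElem, sub_mul, Finset.sum_mul, vtx_mul_vtx, if_pos rfl]
    have h1 : ∀ e ∈ h.toFinset,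
        E.cledg K t e * E.clghost K t e * E.clvtx K t u =
        E.cledg K t e * E.clghost K t e := by
      intro e he
      rw [Set.Finite.mem_toFinset] at he
      rw [mul_assoc, gh_mul_vtx, he, if_pos rfl]
    rw [Finset.sum_congr rfl h1]
  · rw [if_neg hu, qElem, sub_mul, Finset.sum_mul, vtx_mul_vtx,
      if_neg (fun hh => hu hh.symm)]
    have h1 : ∀ e ∈ h.toFinset,
        E.cledg K t e * E.clghost K t e * E.clvtx K t u = 0 := by
      intro e he
      rw [Set.Finite.mem_toFinset] at he
      rw [mul_assoc, gh_mul_vtx, he, if_neg hu, mul_zero]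
    rw [Finset.sum_congr rfl h1, Finset.sum_const_zero, sub_zero]


lemma q_mul_edg {v : E.V} (h : {e : E.Edge | E.s e = v}.Finite) (f : E.Edge) :
    qElem K t E v h * E.cledg K t f = 0 := by
  rw [qElem, sub_mul, Finset.sum_mul, vtx_mul_edg]
  have h1 : ∀ e ∈ h.toFinset, E.cledg K t e * E.clghost K t e * E.cledg K t f
      = if e = f then E.cledg K t f else 0 := by
    intro e he
    rw [mul_assoc, gh_mul_edg]
    split_ifs with hef
    · subst hef; rw [edg_mul_vtx, if_pos rfl]
    · rw [mul_zero]
  rw [Finset.sum_congr rfl h1, Finset.sum_ite_eq' h.toFinset f]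
  by_cases h2 : E.s f = v
  · rw [if_pos h2.symm, if_pos (by rwa [Set.Finite.mem_toFinset]), sub_self]
  · rw [if_neg (fun hh => h2 hh.symm),
      if_neg (by rw [Set.Finite.mem_toFinset]; exact h2), sub_zero]

lemma q_mul_clPath {u v' : E.V} {l : List E.Edge} (hp : E.IsPathFrom u v' l) {v : E.V}
    (h : {e : E.Edge | E.s e = v}.Finite) :
    qElem K t E v h * E.clPath K t u l =
      if l = [] ∧ u = v then qElem K t E v h else 0 := by
  cases l with
  | nil =>
    rw [clPath_nil, q_mul_vtx]
    by_cases hu : u = v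
    · rw [if_pos hu, if_pos ⟨rfl, hu⟩]
    · rw [if_neg hu, if_neg (fun hh => hu hh.2)]
  | cons e l' =>
    rw [clPath_cons hp.1, ← mul_assoc, q_mul_edg, zero_mul,
      if_neg (fun hh => List.cons_ne_nil e l' hh.1)]

lemma vtx_mul_q (u : E.V) {v : E.V} (h : {e : E.Edge | E.s e = v}.Finite) :
    E.clvtx K t u * qElem K t E v h = if u = v then qElem K t E v h else 0 := by
  by_cases hu : u = v
  · subst hu
    rw [if_pos rfl, qElem, mul_sub, Finset.mul_sum, vtx_mul_vtx, if_pos rfl]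
    have h1 : ∀ e ∈ h.toFinset,
        E.clvtx K t u * (E.cledg K t e * E.clghost K t e) =
        E.cledg K t e * E.clghost K t e := by
      intro e he
      rw [Set.Finite.mem_toFinset] at he
      rw [← mul_assoc, vtx_mul_edg, he, if_pos rfl]
    rw [Finset.sum_congr rfl h1]
  · rw [if_neg hu, qElem, mul_sub, Finset.mul_sum, vtx_mul_vtx, if_neg hu]
    have h1 : ∀ e ∈ h.toFinset,
        E.clvtx K t u * (E.cledg K t e * E.clghost K t e) = 0 := by
      intro e he
      rw [Set.Finite.mem_toFinset] at he
      rw [← mul_assoc, vtx_mul_edg, he, if_neg hu, zero_mul]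
    rw [Finset.sum_congr rfl h1, Finset.sum_const_zero, sub_zero]

lemma gh_mul_q (f : E.Edge) {v : E.V} (h : {e : E.Edge | E.s e = v}.Finite) :
    E.clghost K t f * qElem K t E v h = 0 := by
  rw [qElem, mul_sub, Finset.mul_sum, gh_mul_vtx]
  have h1 : ∀ e ∈ h.toFinset, E.clghost K t f * (E.cledg K t e * E.clghost K t e)
      = if f = e then E.clghost K t f else 0 := by
    intro e he
    rw [← mul_assoc, gh_mul_edg]
    split_ifs with hef
    · subst hef; rw [vtx_mul_gh, if_pos rfl]
    · rw [zero_mul]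
  rw [Finset.sum_congr rfl h1, Finset.sum_ite_eq h.toFinset f]
  by_cases h2 : E.s f = v
  · rw [if_pos h2.symm, if_pos (by rwa [Set.Finite.mem_toFinset]), sub_self]
  · rw [if_neg (fun hh => h2 hh.symm),
      if_neg (by rw [Set.Finite.mem_toFinset]; exact h2), sub_zero]

lemma star_mul_q {u v' : E.V} {l : List E.Edge} (hp : E.IsPathFrom u v' l) {v : E.V}
    (h : {e : E.Edge | E.s e = v}.Finite) :
    E.clPathStar K t u l * qElem K t E v h =
      if l = [] ∧ u = v then qElem K t E v h else 0 := by
  cases l with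
  | nil =>
    rw [clPathStar_nil, vtx_mul_q]
    by_cases hu : u = v
    · rw [if_pos hu, if_pos ⟨rfl, hu⟩]
    · rw [if_neg hu, if_neg (fun hh => hu hh.2)]
  | cons e l' =>
    rw [clPathStar_cons hp.1, mul_assoc, gh_mul_q, mul_zero,
      if_neg (fun hh => List.cons_ne_nil e l' hh.1)]

lemma q_idem {v : E.V} (h : {e : E.Edge | E.s e = v}.Finite) :
    qElem K t E v h * qElem K t E v h = qElem K t E v h := by
  nth_rewrite 2 [qElem]
  rw [mul_sub, Finset.mul_sum, q_mul_vtx, if_pos rfl]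
  have h1 : ∀ e ∈ h.toFinset,
      qElem K t E v h * (E.cledg K t e * E.clghost K t e) = 0 := by
    intro e _
    rw [← mul_assoc, q_mul_edg, zero_mul]
  rw [Finset.sum_congr rfl h1, Finset.sum_const_zero, sub_zero]

/-! ### Scalar lemmas for central elements -/

lemma exists_q_scalar {z : E.CL K t} (hz : z ∈ E.clCenter K t) {v : E.V}
    (h : {e : E.Edge | E.s e = v}.Finite) :
    ∃ c : K, z * qElem K t E v h = c • qElem K t E v h := by
  have key : ∃ c : K, qElem K t E v h * z * qElem K t E v h = c • qElem K t E v h := by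
    have hzw := mem_span_wSet hz.1
    refine Submodule.span_induction (p := fun a _ => ∃ c : K,
      qElem K t E v h * a * qElem K t E v h = c • qElem K t E v h) ?_ ?_ ?_ ?_ hzw
    · rintro x ⟨u, w, v₀, l, m, hl, hm, rfl⟩
      have e1 : qElem K t E v h * (E.clPath K t u l * E.clPathStar K t w m) *
          qElem K t E v h =
          (qElem K t E v h * E.clPath K t u l) *
            (E.clPathStar K t w m * qElem K t E v h) := by
        rw [← mul_assoc, mul_assoc (qElem K t E v h * E.clPath K t u l)]
      rw [e1, q_mul_clPath hl h, star_mul_q hm h]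
      split_ifs
      · exact ⟨1, by rw [q_idem, one_smul]⟩
      · exact ⟨0, by rw [mul_zero, zero_smul]⟩
      · exact ⟨0, by rw [zero_mul, zero_smul]⟩
      · exact ⟨0, by rw [zero_mul, zero_smul]⟩
    · exact ⟨0, by rw [mul_zero, zero_mul, zero_smul]⟩
    · rintro a b _ _ ⟨c₁, hc₁⟩ ⟨c₂, hc₂⟩
      exact ⟨c₁ + c₂, by rw [mul_add, add_mul, hc₁, hc₂, add_smul]⟩
    · rintro r a _ ⟨c₁, hc₁⟩
      exact ⟨r * c₁, by rw [mul_smul_comm, smul_mul_assoc, hc₁, smul_smul]⟩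
  obtain ⟨c, hc⟩ := key
  refine ⟨c, ?_⟩
  have e2 : z * qElem K t E v h = qElem K t E v h * z * qElem K t E v h := by
    conv_lhs => rw [← q_idem h]
    rw [← mul_assoc, ← hz.2 _ (qElem_mem h)]
  rw [e2, hc]

lemma exists_sink_scalar {z : E.CL K t} (hz : z ∈ E.clCenter K t) {v : E.V}
    (hsink : ∀ e : E.Edge, E.s e ≠ v) :
    ∃ c : K, z * E.clvtx K t v = c • E.clvtx K t v := by
  have key : ∃ c : K, E.clvtx K t v * z * E.clvtx K t v = c • E.clvtx K t v := by
    have hzw := mem_span_wSet hz.1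
    refine Submodule.span_induction (p := fun a _ => ∃ c : K,
      E.clvtx K t v * a * E.clvtx K t v = c • E.clvtx K t v) ?_ ?_ ?_ ?_ hzw
    · rintro x ⟨u, w, v₀, l, m, hl, hm, rfl⟩
      have e1 : E.clvtx K t v * (E.clPath K t u l * E.clPathStar K t w m) *
          E.clvtx K t v =
          (E.clvtx K t v * E.clPath K t u l) *
            (E.clPathStar K t w m * E.clvtx K t v) := by
        rw [← mul_assoc, mul_assoc (E.clvtx K t v * E.clPath K t u l)]
      rw [e1, vtx_mul_clPath, clPathStar_mul_vtx]
      by_cases h1 : v = u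
      · by_cases h2 : v = w
        · subst h1; subst h2
          rw [if_pos rfl, if_pos rfl]
          cases l with
          | cons e l' => exact absurd hl.1 (hsink e)
          | nil =>
            cases m with
            | cons f m' => exact absurd hm.1 (hsink f)
            | nil =>
              rw [clPath_nil, clPathStar_nil, vtx_mul_vtx, if_pos rfl]
              exact ⟨1, (one_smul K _).symm⟩
        · rw [if_neg h2, mul_zero]
          exact ⟨0, (zero_smul K _).symm⟩
      · rw [if_neg h1, zero_mul]
        exact ⟨0, (zero_smul K _).symm⟩
    · exact ⟨0, by rw [mul_zero, zero_mul, zero_smul]⟩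
    · rintro a b _ _ ⟨c₁, hc₁⟩ ⟨c₂, hc₂⟩
      exact ⟨c₁ + c₂, by rw [mul_add, add_mul, hc₁, hc₂, add_smul]⟩
    · rintro r a _ ⟨c₁, hc₁⟩
      exact ⟨r * c₁, by rw [mul_smul_comm, smul_mul_assoc, hc₁, smul_smul]⟩
  obtain ⟨c, hc⟩ := key
  refine ⟨c, ?_⟩
  have e2 : z * E.clvtx K t v = E.clvtx K t v * z * E.clvtx K t v := by
    have hv : E.clvtx K t v * E.clvtx K t v = E.clvtx K t v := by
      rw [vtx_mul_vtx, if_pos rfl]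
    conv_lhs => rw [← hv]
    rw [← mul_assoc, ← hz.2 _ (vtx_mem v)]
  rw [e2, hc]


/-! ### Degree-zero elements conjugate to scalars along long paths -/

lemma deg0_bound {z : E.CL K t} (hz : z ∈ E.clDeg0 K t) :
    ∃ n : ℕ, ∀ (x₀ v : E.V) (g : List E.Edge), E.IsPathFrom x₀ v g → n ≤ g.length →
      ∃ c : K, E.clPathStar K t x₀ g * z * E.clPath K t x₀ g = c • E.clvtx K t v := by
  refine Submodule.span_induction (p := fun a _ => ∃ n : ℕ,
    ∀ (x₀ v : E.V) (g : List E.Edge), E.IsPathFrom x₀ v g → n ≤ g.length →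
    ∃ c : K, E.clPathStar K t x₀ g * a * E.clPath K t x₀ g = c • E.clvtx K t v)
    ?_ ?_ ?_ ?_ hz
  · rintro x ⟨u, w, v₀, l, m, hl, hm, hlm, rfl⟩
    refine ⟨l.length, fun x₀ v g hg hlen => ?_⟩
    have e1 : E.clPathStar K t x₀ g * (E.clPath K t u l * E.clPathStar K t w m) *
        E.clPath K t x₀ g =
        (E.clPathStar K t x₀ g * E.clPath K t u l) *
          (E.clPathStar K t w m * E.clPath K t x₀ g) := by
      rw [← mul_assoc, mul_assoc (E.clPathStar K t x₀ g * E.clPath K t u l)]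
    rw [e1]
    rcases star_mul_path (K := K) (t := t) hg hl with
      ⟨hux, l₂, hL, hp2, heqA⟩ | ⟨hux, m₂, hM, hp2, heqA⟩ | hA0
    · have hl₂ : l₂ = [] := by
        have h5 := congrArg List.length hL
        rw [List.length_append] at h5
        exact List.eq_nil_of_length_eq_zero (by omega)
      subst hl₂
      rw [isPathFrom_nil] at hp2
      have hgl : g.length = m.length := by
        have h5 := congrArg List.length hL
        rw [List.length_append] at h5
        omega
      rw [heqA, clPath_nil]
      rcases star_mul_path_eqlen (K := K) (t := t) hm hg hgl with
        ⟨hxw, hgm, hvv, heqB⟩ | hB0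
      · rw [heqB, vtx_mul_vtx, if_pos hp2]
        exact ⟨1, (one_smul K _).symm⟩
      · rw [hB0, mul_zero]
        exact ⟨0, (zero_smul K _).symm⟩
    · rw [heqA]
      rcases star_mul_path (K := K) (t := t) hm hg with
        ⟨hxw, l₂', hL', hp2', heqB⟩ | ⟨hxw, m₂', hM', hp2', heqB⟩ | hB0
      · rw [heqB]
        have hlen2 : l₂'.length = m₂.length := by
          have h5 := congrArg List.length hM
          have h6 := congrArg List.length hL'
          rw [List.length_append] at h5 h6
          omega
        rcases star_mul_path_eqlen (K := K) (t := t) hp2 hp2' hlen2 with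
          ⟨_, _, _, heqC⟩ | hC0
        · rw [heqC]; exact ⟨1, (one_smul K _).symm⟩
        · rw [hC0]; exact ⟨0, (zero_smul K _).symm⟩
      · have hm₂' : m₂' = [] := by
          have h5 := congrArg List.length hM'
          rw [List.length_append] at h5
          exact List.eq_nil_of_length_eq_zero (by omega)
        subst hm₂'
        have hm₂ : m₂ = [] := by
          have h5 := congrArg List.length hM'
          have h6 := congrArg List.length hM
          rw [List.length_append] at h5 h6
          exact List.eq_nil_of_length_eq_zero (by omega)
        subst hm₂
        rw [isPathFrom_nil] at hp2 hp2'
        rw [heqB, clPathStar_nil, clPathStar_nil, vtx_mul_vtx, if_pos hp2]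
        exact ⟨1, by rw [one_smul, hp2]⟩
      · rw [hB0, mul_zero]
        exact ⟨0, (zero_smul K _).symm⟩
    · rw [hA0, zero_mul]
      exact ⟨0, (zero_smul K _).symm⟩
  · exact ⟨0, fun x₀ v g hg _ => ⟨0, by rw [mul_zero, zero_mul, zero_smul]⟩⟩
  · rintro a b _ _ ⟨n₁, ha⟩ ⟨n₂, hb⟩
    refine ⟨max n₁ n₂, fun x₀ v g hg hlen => ?_⟩
    obtain ⟨c₁, hc₁⟩ := ha x₀ v g hg (le_trans (le_max_left _ _) hlen)
    obtain ⟨c₂, hc₂⟩ := hb x₀ v g hg (le_trans (le_max_right _ _) hlen)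
    exact ⟨c₁ + c₂, by rw [mul_add, add_mul, hc₁, hc₂, add_smul]⟩
  · rintro r a _ ⟨n₁, ha⟩
    refine ⟨n₁, fun x₀ v g hg hlen => ?_⟩
    obtain ⟨c₁, hc₁⟩ := ha x₀ v g hg hlen
    exact ⟨r * c₁, by rw [mul_smul_comm, smul_mul_assoc, hc₁, smul_smul]⟩

lemma exists_deep_scalar {z : E.CL K t} (hzc : z ∈ E.clCenter K t)
    (hz0 : z ∈ E.clDeg0 K t) :
    ∃ n : ℕ, ∀ (x₀ v : E.V) (g : List E.Edge), E.IsPathFrom x₀ v g → n ≤ g.length →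
      ∃ c : K, z * E.clvtx K t v = c • E.clvtx K t v := by
  obtain ⟨n, hn⟩ := deg0_bound hz0
  refine ⟨n, fun x₀ v g hg hlen => ?_⟩
  obtain ⟨c, hc⟩ := hn x₀ v g hg hlen
  refine ⟨c, ?_⟩
  have e2 : E.clPathStar K t x₀ g * z * E.clPath K t x₀ g = z * E.clvtx K t v := by
    rw [mul_assoc, ← hzc.2 _ (clPath_mem hg), ← mul_assoc, star_mul_path_self hg,
      hzc.2 _ (vtx_mem v)]
  rw [← e2, hc]


/-! ### A representation with nonzero vertex actions -/

section Rep

variable (E) in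
noncomputable def pick (v : E.V) : Option E.Edge :=
  if h : ∃ e, E.s e = v then some h.choose else none

lemma pick_some {v : E.V} {e : E.Edge} (h : pick E v = some e) : E.s e = v := by
  by_cases h' : ∃ e, E.s e = v
  · rw [pick, dif_pos h'] at h
    exact (Option.some.inj h) ▸ h'.choose_spec
  · rw [pick, dif_neg h'] at h
    exact absurd h (by simp)

lemma pick_of_exists {v : E.V} (h : ∃ e, E.s e = v) : ∃ e, pick E v = some e := by
  rw [pick, dif_pos h]
  exact ⟨h.choose, rfl⟩

variable (E) in
def RVal : E.V → List E.Edge → Prop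
  | _, [] => True
  | v, e :: l => E.s e = v ∧ RVal (E.r e) l

variable (E) in
def Red (l : List E.Edge) : Prop :=
  ∀ e, l.getLast? = some e → ¬ pick E (E.s e) = some e

lemma red_nil : Red E [] := by
  intro e h
  simp at h

lemma red_tail {f : E.Edge} {l : List E.Edge} (h : Red E (f :: l)) : Red E l := by
  intro e he
  cases l with
  | nil => simp at he
  | cons g l' => exact h e (by rwa [List.getLast?_cons_cons])

lemma red_cons {f : E.Edge} {l : List E.Edge} (h : Red E l) (hl : l ≠ []) :
    Red E (f :: l) := by
  intro e he
  cases l with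
  | nil => exact absurd rfl hl
  | cons g l' => exact h e (by rwa [List.getLast?_cons_cons] at he)

lemma red_single {e : E.Edge} (h : ¬ pick E (E.s e) = some e) : Red E [e] := by
  intro e' he
  have : e = e' := by simpa using he
  subst this
  exact h

variable (E) in
def ROk (p : E.V × List E.Edge) : Prop := RVal E p.1 p.2 ∧ Red E p.2

variable (K E) in
noncomputable def fV (u : E.V) : E.V × List E.Edge → ((E.V × List E.Edge) →₀ K)
  | (v, l) => if ROk E (v, l) ∧ v = u then Finsupp.single (v, l) 1 else 0

variable (K E) in
noncomputable def fE (e : E.Edge) : E.V × List E.Edge → ((E.V × List E.Edge) →₀ K)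
  | (v, []) =>
    if ROk E (v, []) ∧ v = E.r e then
      (if pick E (E.s e) = some e then Finsupp.single (E.s e, []) 1
       else Finsupp.single (E.s e, [e]) 1)
    else 0
  | (v, f :: l') =>
    if ROk E (v, f :: l') ∧ v = E.r e then Finsupp.single (E.s e, e :: f :: l') 1
    else 0

variable (K E) in
noncomputable def fG (e : E.Edge) : E.V × List E.Edge → ((E.V × List E.Edge) →₀ K)
  | (v, []) =>
    if ROk E (v, []) ∧ v = E.s e ∧ pick E v = some e then
      Finsupp.single (E.r e, ([] : List E.Edge)) 1
    else 0
  | (v, f :: l') =>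
    if ROk E (v, f :: l') ∧ f = e then Finsupp.single (E.r e, l') 1 else 0

variable (K E) in
noncomputable def repOp (F : E.V × List E.Edge → ((E.V × List E.Edge) →₀ K)) :
    Module.End K ((E.V × List E.Edge) →₀ K) :=
  Finsupp.lsum K fun p => LinearMap.toSpanSingleton K _ (F p)

lemma repOp_single (F : E.V × List E.Edge → ((E.V × List E.Edge) →₀ K))
    (p : E.V × List E.Edge) (b : K) :
    repOp K E F (Finsupp.single p b) = b • F p := by
  rw [repOp, Finsupp.lsum_single, LinearMap.toSpanSingleton_apply]

lemma repOp_single_one (F : E.V × List E.Edge → ((E.V × List E.Edge) →₀ K))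
    (p : E.V × List E.Edge) :
    repOp K E F (Finsupp.single p 1) = F p := by
  rw [repOp_single, one_smul]

lemma repOp_mul_eq {F G H : E.V × List E.Edge → ((E.V × List E.Edge) →₀ K)}
    (hFGH : ∀ p, repOp K E F (G p) = H p) :
    (repOp K E F) * (repOp K E G) = repOp K E H := by
  refine Finsupp.lhom_ext fun p b => ?_
  rw [Module.End.mul_apply, repOp_single, map_smul, hFGH, repOp_single]

lemma repOp_mul_eq_zero {F G : E.V × List E.Edge → ((E.V × List E.Edge) →₀ K)}
    (hFG : ∀ p, repOp K E F (G p) = 0) :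
    (repOp K E F) * (repOp K E G) = 0 := by
  refine Finsupp.lhom_ext fun p b => ?_
  rw [Module.End.mul_apply, repOp_single, map_smul, hFG, smul_zero, LinearMap.zero_apply]


lemma rok_nil (v : E.V) : ROk E (v, []) := ⟨trivial, red_nil⟩

lemma L_vv_eq (u : E.V) (p : E.V × List E.Edge) :
    repOp K E (fV K E u) (fV K E u p) = fV K E u p := by
  obtain ⟨v, l⟩ := p
  simp only [fV]
  by_cases h : ROk E (v, l) ∧ v = u
  · rw [if_pos h, repOp_single_one, fV, if_pos h]
  · rw [if_neg h, map_zero]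

lemma L_vv_ne {u w : E.V} (huw : u ≠ w) (p : E.V × List E.Edge) :
    repOp K E (fV K E u) (fV K E w p) = 0 := by
  obtain ⟨v, l⟩ := p
  simp only [fV]
  by_cases h : ROk E (v, l) ∧ v = w
  · rw [if_pos h, repOp_single_one, fV,
      if_neg (fun hh => huw ((hh.2.symm.trans h.2)))]
  · rw [if_neg h, map_zero]

lemma L_ve_edge_eq (e : E.Edge) (p : E.V × List E.Edge) :
    repOp K E (fV K E (E.s e)) (fE K E e p) = fE K E e p := by
  obtain ⟨v, l⟩ := p
  cases l with
  | nil =>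
    simp only [fE]
    by_cases h : ROk E (v, []) ∧ v = E.r e
    · rw [if_pos h]
      by_cases h2 : pick E (E.s e) = some e
      · rw [if_pos h2, repOp_single_one, fV, if_pos ⟨rok_nil _, rfl⟩]
      · rw [if_neg h2, repOp_single_one, fV,
          if_pos ⟨⟨⟨rfl, trivial⟩, red_single h2⟩, rfl⟩]
    · rw [if_neg h, map_zero]
  | cons f l' =>
    simp only [fE]
    by_cases h : ROk E (v, f :: l') ∧ v = E.r e
    · rw [if_pos h, repOp_single_one, fV,
        if_pos ⟨⟨⟨rfl, h.2 ▸ h.1.1⟩, red_cons h.1.2 (List.cons_ne_nil f l')⟩, rfl⟩]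
    · rw [if_neg h, map_zero]

lemma L_ve_edge_ne {u : E.V} (e : E.Edge) (hne : E.s e ≠ u) (p : E.V × List E.Edge) :
    repOp K E (fV K E u) (fE K E e p) = 0 := by
  obtain ⟨v, l⟩ := p
  cases l with
  | nil =>
    simp only [fE]
    by_cases h : ROk E (v, []) ∧ v = E.r e
    · rw [if_pos h]
      by_cases h2 : pick E (E.s e) = some e
      · rw [if_pos h2, repOp_single_one, fV, if_neg (fun hh => hne hh.2)]
      · rw [if_neg h2, repOp_single_one, fV, if_neg (fun hh => hne hh.2)]
    · rw [if_neg h, map_zero]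
  | cons f l' =>
    simp only [fE]
    by_cases h : ROk E (v, f :: l') ∧ v = E.r e
    · rw [if_pos h, repOp_single_one, fV, if_neg (fun hh => hne hh.2)]
    · rw [if_neg h, map_zero]

lemma L_ev_edge_eq (e : E.Edge) (p : E.V × List E.Edge) :
    repOp K E (fE K E e) (fV K E (E.r e) p) = fE K E e p := by
  obtain ⟨v, l⟩ := p
  simp only [fV]
  by_cases h : ROk E (v, l) ∧ v = E.r e
  · rw [if_pos h, repOp_single_one]
  · rw [if_neg h, map_zero]
    cases l with
    | nil => rw [fE, if_neg h]
    | cons f l' => rw [fE, if_neg h]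

lemma L_ev_edge_ne {u : E.V} (e : E.Edge) (hne : E.r e ≠ u) (p : E.V × List E.Edge) :
    repOp K E (fE K E e) (fV K E u p) = 0 := by
  obtain ⟨v, l⟩ := p
  simp only [fV]
  by_cases h : ROk E (v, l) ∧ v = u
  · rw [if_pos h, repOp_single_one]
    cases l with
    | nil => rw [fE, if_neg (fun hh => hne (h.2 ▸ hh.2).symm)]
    | cons f l' => rw [fE, if_neg (fun hh => hne (h.2 ▸ hh.2).symm)]
  · rw [if_neg h, map_zero]

lemma L_ve_gh_eq (e : E.Edge) (p : E.V × List E.Edge) :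
    repOp K E (fV K E (E.r e)) (fG K E e p) = fG K E e p := by
  obtain ⟨v, l⟩ := p
  cases l with
  | nil =>
    simp only [fG]
    by_cases h : ROk E (v, []) ∧ v = E.s e ∧ pick E v = some e
    · rw [if_pos h, repOp_single_one, fV, if_pos ⟨rok_nil _, rfl⟩]
    · rw [if_neg h, map_zero]
  | cons f l' =>
    simp only [fG]
    by_cases h : ROk E (v, f :: l') ∧ f = e
    · rw [if_pos h, repOp_single_one, fV,
        if_pos ⟨⟨h.2 ▸ h.1.1.2, red_tail h.1.2⟩, rfl⟩]
    · rw [if_neg h, map_zero]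

lemma L_ve_gh_ne {u : E.V} (e : E.Edge) (hne : E.r e ≠ u) (p : E.V × List E.Edge) :
    repOp K E (fV K E u) (fG K E e p) = 0 := by
  obtain ⟨v, l⟩ := p
  cases l with
  | nil =>
    simp only [fG]
    by_cases h : ROk E (v, []) ∧ v = E.s e ∧ pick E v = some e
    · rw [if_pos h, repOp_single_one, fV, if_neg (fun hh => hne hh.2)]
    · rw [if_neg h, map_zero]
  | cons f l' =>
    simp only [fG]
    by_cases h : ROk E (v, f :: l') ∧ f = e
    · rw [if_pos h, repOp_single_one, fV, if_neg (fun hh => hne hh.2)]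
    · rw [if_neg h, map_zero]

lemma L_ev_gh_eq (e : E.Edge) (p : E.V × List E.Edge) :
    repOp K E (fG K E e) (fV K E (E.s e) p) = fG K E e p := by
  obtain ⟨v, l⟩ := p
  simp only [fV]
  by_cases h : ROk E (v, l) ∧ v = E.s e
  · rw [if_pos h, repOp_single_one]
  · rw [if_neg h, map_zero]
    cases l with
    | nil => rw [fG, if_neg (fun hh => h ⟨hh.1, hh.2.1⟩)]
    | cons f l' =>
      rw [fG, if_neg (fun hh => h ⟨hh.1, hh.1.1.1.symm.trans (congrArg E.s hh.2)⟩)]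

lemma L_ev_gh_ne {u : E.V} (e : E.Edge) (hne : E.s e ≠ u) (p : E.V × List E.Edge) :
    repOp K E (fG K E e) (fV K E u p) = 0 := by
  obtain ⟨v, l⟩ := p
  simp only [fV]
  by_cases h : ROk E (v, l) ∧ v = u
  · rw [if_pos h, repOp_single_one]
    cases l with
    | nil => rw [fG, if_neg (fun hh => hne (hh.2.1.symm.trans h.2))]
    | cons f l' =>
      rw [fG, if_neg (fun hh => hne
        (((congrArg E.s hh.2).symm.trans hh.1.1.1).trans h.2))]
  · rw [if_neg h, map_zero]

lemma L_ck1_eq (e : E.Edge) (p : E.V × List E.Edge) :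
    repOp K E (fG K E e) (fE K E e p) = fV K E (E.r e) p := by
  obtain ⟨v, l⟩ := p
  cases l with
  | nil =>
    simp only [fE, fV]
    by_cases h : ROk E (v, []) ∧ v = E.r e
    · rw [if_pos h, if_pos h]
      by_cases h2 : pick E (E.s e) = some e
      · rw [if_pos h2, repOp_single_one, fG, if_pos ⟨rok_nil _, rfl, h2⟩, h.2]
      · rw [if_neg h2, repOp_single_one, fG,
          if_pos ⟨⟨⟨rfl, trivial⟩, red_single h2⟩, rfl⟩, h.2]
    · rw [if_neg h, if_neg h, map_zero]
  | cons f l' =>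
    simp only [fE, fV]
    by_cases h : ROk E (v, f :: l') ∧ v = E.r e
    · rw [if_pos h, if_pos h, repOp_single_one, fG,
        if_pos ⟨⟨⟨rfl, h.2 ▸ h.1.1⟩, red_cons h.1.2 (List.cons_ne_nil f l')⟩, rfl⟩, h.2]
    · rw [if_neg h, if_neg h, map_zero]

lemma L_ck1_ne {e f : E.Edge} (hef : e ≠ f) (p : E.V × List E.Edge) :
    repOp K E (fG K E e) (fE K E f p) = 0 := by
  obtain ⟨v, l⟩ := p
  cases l with
  | nil =>
    simp only [fE]
    by_cases h : ROk E (v, []) ∧ v = E.r f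
    · rw [if_pos h]
      by_cases h2 : pick E (E.s f) = some f
      · rw [if_pos h2, repOp_single_one, fG,
          if_neg (fun hh => hef (Option.some.inj (h2.symm.trans hh.2.2)).symm)]
      · rw [if_neg h2, repOp_single_one, fG, if_neg (fun hh => hef hh.2.symm)]
    · rw [if_neg h, map_zero]
  | cons g l' =>
    simp only [fE]
    by_cases h : ROk E (v, g :: l') ∧ v = E.r f
    · rw [if_pos h, repOp_single_one, fG, if_neg (fun hh => hef hh.2.symm)]
    · rw [if_neg h, map_zero]

lemma L_ck2 (v : E.V) (hfin : {e : E.Edge | E.s e = v}.Finite)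
    (hne : {e : E.Edge | E.s e = v}.Nonempty) (p : E.V × List E.Edge) :
    ∑ e ∈ hfin.toFinset, repOp K E (fE K E e) (fG K E e p) = fV K E v p := by
  obtain ⟨w, l⟩ := p
  by_cases hok : ROk E (w, l)
  · cases l with
    | nil =>
      by_cases hwv : w = v
      · subst hwv
        obtain ⟨e0, hpick⟩ := pick_of_exists (E := E) (v := w) hne
        have hse0 : E.s e0 = w := pick_some hpick
        rw [Finset.sum_eq_single e0]
        · rw [fG, if_pos ⟨hok, hse0.symm, hpick⟩, repOp_single_one, fE,
            if_pos ⟨rok_nil _, rfl⟩, if_pos (hse0 ▸ hpick), fV, if_pos ⟨hok, rfl⟩, hse0]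
        · intro b hb hbe
          rw [fG, if_neg, map_zero]
          intro hh
          exact hbe (Option.some.inj (hpick.symm.trans hh.2.2)).symm
        · intro habs
          exact absurd (hfin.mem_toFinset.mpr hse0) habs
      · have hz : ∀ e ∈ hfin.toFinset, repOp K E (fE K E e) (fG K E e (w, [])) = 0 := by
          intro e he
          rw [Set.Finite.mem_toFinset] at he
          rw [fG, if_neg (fun hh => hwv (hh.2.1.trans he)), map_zero]
        rw [Finset.sum_congr rfl hz, Finset.sum_const_zero, fV,
          if_neg (fun hh => hwv hh.2)]
    | cons f l' =>
      have hsf : E.s f = w := hok.1.1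
      by_cases hwv : w = v
      · subst hwv
        rw [Finset.sum_eq_single f]
        · rw [fG, if_pos ⟨hok, rfl⟩, repOp_single_one]
          have hokt : ROk E (E.r f, l') := ⟨hok.1.2, red_tail hok.2⟩
          cases l' with
          | nil =>
            rw [fE, if_pos ⟨hokt, rfl⟩, if_neg (hok.2 f (by simp)),
              fV, if_pos ⟨hok, rfl⟩, hsf]
          | cons g l'' =>
            rw [fE, if_pos ⟨hokt, rfl⟩, fV, if_pos ⟨hok, rfl⟩, hsf]
        · intro b hb hbf
          have hcond : ¬(E.ROk (w, f :: l') ∧ f = b) := fun hh => hbf hh.2.symm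
          rw [fG, if_neg hcond, map_zero]
        · intro habs
          exact absurd (hfin.mem_toFinset.mpr hsf) habs
      · have hz : ∀ e ∈ hfin.toFinset, repOp K E (fE K E e) (fG K E e (w, f :: l')) = 0 := by
          intro e he
          rw [Set.Finite.mem_toFinset] at he
          rw [fG, if_neg, map_zero]
          intro hh
          exact hwv ((hsf.symm.trans (congrArg E.s hh.2)).trans he)
        rw [Finset.sum_congr rfl hz, Finset.sum_const_zero, fV,
          if_neg (fun hh => hwv hh.2)]
  · have hz : ∀ e ∈ hfin.toFinset, repOp K E (fE K E e) (fG K E e (w, l)) = 0 := by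
      intro e _
      cases l with
      | nil => rw [fG, if_neg (fun hh => hok hh.1), map_zero]
      | cons f l' => rw [fG, if_neg (fun hh => hok hh.1), map_zero]
    rw [Finset.sum_congr rfl hz, Finset.sum_const_zero]
    cases l with
    | nil => rw [fV, if_neg (fun hh => hok hh.1)]
    | cons f l' => rw [fV, if_neg (fun hh => hok hh.1)]


variable (K E) in
noncomputable def repPsi : FreeAlgebra K E.ext.Gen →ₐ[K] Module.End K ((E.V × List E.Edge) →₀ K) :=
  FreeAlgebra.lift K fun g =>
    match g with
    | Sum.inl u => repOp K E (fV K E u)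
    | Sum.inr (Sum.inl e) => repOp K E (fE K E e)
    | Sum.inr (Sum.inr e) => repOp K E (fG K E e)

lemma repPsi_gen_vtx (u : E.V) :
    repPsi K E (FreeAlgebra.ι K (Sum.inl u)) = repOp K E (fV K E u) := by
  rw [repPsi, FreeAlgebra.lift_ι_apply]

lemma repPsi_gen_edg (e : E.Edge) :
    repPsi K E (FreeAlgebra.ι K (Sum.inr (Sum.inl e))) = repOp K E (fE K E e) := by
  rw [repPsi, FreeAlgebra.lift_ι_apply]

lemma repPsi_gen_gh (e : E.Edge) :
    repPsi K E (FreeAlgebra.ι K (Sum.inr (Sum.inr e))) = repOp K E (fG K E e) := by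
  rw [repPsi, FreeAlgebra.lift_ι_apply]

lemma repPsi_rel {a b : FreeAlgebra K E.ext.Gen} (h : E.CLRel K t a b) :
    repPsi K E a = repPsi K E b := by
  cases h with
  | base _ hr =>
    cases hr with
    | vv_eq u =>
      erw [map_mul, repPsi_gen_vtx]
      exact repOp_mul_eq (L_vv_eq (K := K) (E := E) u)
    | vv_ne u w huw =>
      erw [map_mul, repPsi_gen_vtx, repPsi_gen_vtx, map_zero]
      exact repOp_mul_eq_zero (L_vv_ne (K := K) (E := E) huw)
    | ve_eq e =>
      cases e with
      | inl e =>
        erw [map_mul, repPsi_gen_vtx, repPsi_gen_edg]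
        exact repOp_mul_eq (L_ve_edge_eq (K := K) (E := E) e)
      | inr e =>
        erw [map_mul, repPsi_gen_vtx, repPsi_gen_gh]
        exact repOp_mul_eq (L_ve_gh_eq (K := K) (E := E) e)
    | ve_ne u e h =>
      cases e with
      | inl e =>
        erw [map_mul, repPsi_gen_vtx, repPsi_gen_edg, map_zero]
        exact repOp_mul_eq_zero (L_ve_edge_ne (K := K) (E := E) e h)
      | inr e =>
        erw [map_mul, repPsi_gen_vtx, repPsi_gen_gh, map_zero]
        exact repOp_mul_eq_zero (L_ve_gh_ne (K := K) (E := E) e h)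
    | ev_eq e =>
      cases e with
      | inl e =>
        erw [map_mul, repPsi_gen_edg, repPsi_gen_vtx]
        exact repOp_mul_eq (L_ev_edge_eq (K := K) (E := E) e)
      | inr e =>
        erw [map_mul, repPsi_gen_gh, repPsi_gen_vtx]
        exact repOp_mul_eq (L_ev_gh_eq (K := K) (E := E) e)
    | ev_ne e u h =>
      cases e with
      | inl e =>
        erw [map_mul, repPsi_gen_edg, repPsi_gen_vtx, map_zero]
        exact repOp_mul_eq_zero (L_ev_edge_ne (K := K) (E := E) e h)
      | inr e =>
        erw [map_mul, repPsi_gen_gh, repPsi_gen_vtx, map_zero]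
        exact repOp_mul_eq_zero (L_ev_gh_ne (K := K) (E := E) e h)
  | ck1_eq _ e =>
    erw [map_mul, repPsi_gen_gh, repPsi_gen_edg, repPsi_gen_vtx]
    exact repOp_mul_eq (L_ck1_eq (K := K) (E := E) e)
  | ck1_ne _ e f hef =>
    erw [map_mul, repPsi_gen_gh, repPsi_gen_edg, map_zero]
    exact repOp_mul_eq_zero (L_ck1_ne (K := K) (E := E) hef)
  | ck2 v hfin hne =>
    rw [map_sum, repPsi_gen_vtx]
    have hterm : ∀ e ∈ hfin.toFinset,
        repPsi K E (FreeAlgebra.ι K (Sum.inr (Sum.inl e)) *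
          FreeAlgebra.ι K (Sum.inr (Sum.inr e))) =
        repOp K E (fE K E e) * repOp K E (fG K E e) := by
      intro e _
      erw [map_mul, repPsi_gen_edg, repPsi_gen_gh]
    rw [Finset.sum_congr rfl hterm]
    refine Finsupp.lhom_ext fun p b => ?_
    rw [repOp_single, LinearMap.sum_apply]
    have hterm2 : ∀ e ∈ hfin.toFinset,
        (repOp K E (fE K E e) * repOp K E (fG K E e)) (Finsupp.single p b) =
        b • (repOp K E (fE K E e) (fG K E e p)) := by
      intro e _
      rw [Module.End.mul_apply, repOp_single, map_smul]
    rw [Finset.sum_congr rfl hterm2, ← Finset.smul_sum, L_ck2 v hfin hne p]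

lemma clvtx_ne_zero (u : E.V) : E.clvtx K t u ≠ 0 := by
  intro h0
  have h1 : (RingQuot.liftAlgHom K
      ⟨repPsi K E, fun _ _ h => repPsi_rel (t := t) h⟩) (E.clvtx K t u) = 0 := by
    rw [h0, map_zero]
  rw [clvtx, RingQuot.liftAlgHom_mkAlgHom_apply, repPsi_gen_vtx] at h1
  have h2 := congrArg (fun F : Module.End K ((E.V × List E.Edge) →₀ K) =>
    F (Finsupp.single (u, ([] : List E.Edge)) (1 : K))) h1
  simp only [LinearMap.zero_apply] at h2
  rw [repOp_single_one, fV, if_pos ⟨rok_nil u, rfl⟩] at h2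
  exact one_ne_zero (Finsupp.single_eq_zero.mp h2)

end Rep


/-! ### The prime case -/

section Main

variable [Fintype E.V]

lemma clOne_central : E.clOne K t ∈ E.clCenter K t :=
  ⟨clOne_mem, fun a ha => by rw [(mul_clOne ha).1, (mul_clOne ha).2]⟩

lemma smul_clOne_central (k : K) : k • E.clOne K t ∈ E.clCenter K t := by
  refine ⟨SMulMemClass.smul_mem k clOne_mem, fun a ha => ?_⟩
  rw [mul_smul_comm, smul_mul_assoc, (mul_clOne ha).1, (mul_clOne ha).2]

lemma vtx_deg0 (u : E.V) : E.clvtx K t u ∈ E.clDeg0 K t := by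
  refine Submodule.subset_span ⟨u, u, u, [], [], rfl, rfl, rfl, ?_⟩
  rw [clPath_nil, clPathStar_nil, vtx_mul_vtx, if_pos rfl]

lemma clOne_deg0 : E.clOne K t ∈ E.clDeg0 K t := by
  rw [clOne_eq]
  exact sum_mem (fun u _ => vtx_deg0 u)

lemma conclude_scalar {z : E.CL K t} (hzc : z ∈ E.clCenter K t)
    (hprime : IsPrimeSet (E.clSub K t : Set (E.CL K t))) (v₀ : E.V) (c : K)
    (hc : z * E.clvtx K t v₀ = c • E.clvtx K t v₀) :
    z = c • E.clOne K t := by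
  set y := z - c • E.clOne K t with hy
  have hy_mem : y ∈ E.clSub K t :=
    sub_mem hzc.1 (SMulMemClass.smul_mem c clOne_mem)
  have hy_comm : ∀ a ∈ E.clSub K t, a * y = y * a := by
    intro a ha
    rw [hy, mul_sub, sub_mul, hzc.2 a ha, mul_smul_comm, smul_mul_assoc,
      (mul_clOne ha).1, (mul_clOne ha).2]
  have hyv : y * E.clvtx K t v₀ = 0 := by
    rw [hy, sub_mul, hc, smul_mul_assoc, (mul_clOne (vtx_mem v₀)).2, sub_self]
  have hzero : ∀ x ∈ (E.clSub K t : Set (E.CL K t)), E.clvtx K t v₀ * x * y = 0 := by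
    intro x hx
    rw [mul_assoc, hy_comm x hx, ← mul_assoc, hy_comm _ (vtx_mem v₀), hyv, zero_mul]
  rcases hprime.2 _ (vtx_mem v₀) _ hy_mem hzero with h | h
  · exact absurd h (clvtx_ne_zero v₀)
  · exact sub_eq_zero.mp h

lemma prime_case (hprime : IsPrimeSet (E.clSub K t : Set (E.CL K t))) :
    {z : E.CL K t | z ∈ E.clCenter K t ∧ z ∈ E.clDeg0 K t} =
      Set.range fun k : K => k • E.clOne K t := by
  have hV : Nonempty E.V := by
    by_contra hV
    obtain ⟨a, ha, hane⟩ := hprime.1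
    apply hane
    have hgen : (Set.range (E.clvtx K t) ∪ Set.range (E.cledg K t) ∪
        Set.range (E.clghost K t)) ⊆ ((⊥ : NonUnitalSubalgebra K (E.CL K t)) :
          Set (E.CL K t)) := by
      rintro x ((⟨u, _⟩ | ⟨e, _⟩) | ⟨e, _⟩)
      · exact absurd ⟨u⟩ hV
      · exact absurd ⟨E.s e⟩ hV
      · exact absurd ⟨E.s e⟩ hV
    have hle := NonUnitalAlgebra.adjoin_le hgen
    have hmem := hle ha
    simpa [NonUnitalAlgebra.mem_bot] using hmem
  ext z
  constructor
  · rintro ⟨hzc, hz0⟩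
    obtain ⟨n, hdeep⟩ := exists_deep_scalar hzc hz0
    by_cases hsink : ∃ v : E.V, ∀ e : E.Edge, E.s e ≠ v
    · obtain ⟨v₀, hs⟩ := hsink
      obtain ⟨c, hc⟩ := exists_sink_scalar hzc hs
      exact ⟨c, (conclude_scalar hzc hprime v₀ c hc).symm⟩
    · push_neg at hsink
      have hpath : ∀ (k : ℕ) (v : E.V), ∃ (w : E.V) (g : List E.Edge),
          E.IsPathFrom v w g ∧ g.length = k := by
        intro k
        induction k with
        | zero => exact fun v => ⟨v, [], rfl, rfl⟩
        | succ k ih =>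
          intro v
          obtain ⟨e, he⟩ := hsink v
          obtain ⟨w, g, hg, hlen⟩ := ih (E.r e)
          exact ⟨w, e :: g, ⟨he, hg⟩, by simp [hlen]⟩
      obtain ⟨vstart⟩ := hV
      obtain ⟨v₀, g, hg, hlen⟩ := hpath n vstart
      obtain ⟨c, hc⟩ := hdeep vstart v₀ g hg (le_of_eq hlen.symm)
      exact ⟨c, (conclude_scalar hzc hprime v₀ c hc).symm⟩
  · rintro ⟨k, rfl⟩
    exact ⟨smul_clOne_central k, Submodule.smul_mem _ _ clOne_deg0⟩

end Main


/-! ### The recursion formula and the spanning family -/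

lemma edg_mul_clPath (e : E.Edge) (u : E.V) (l : List E.Edge) :
    E.cledg K t e * E.clPath K t u l =
      if u = E.r e then E.clPath K t (E.s e) (e :: l) else 0 := by
  rw [clPath, ← mul_assoc, edg_mul_vtx]
  split_ifs with h
  · rw [clPath, List.map_cons, List.prod_cons, ← mul_assoc, vtx_mul_edg, if_pos rfl]
  · rw [zero_mul]

lemma clPathStar_mul_gh (e : E.Edge) (u : E.V) (l : List E.Edge) :
    E.clPathStar K t u l * E.clghost K t e =
      if u = E.r e then E.clPathStar K t (E.s e) (e :: l) else 0 := by
  rw [clPathStar, mul_assoc, vtx_mul_gh]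
  split_ifs with h
  · rw [clPathStar, List.map_cons, List.reverse_cons, List.prod_append, List.prod_cons,
      List.prod_nil, mul_one, mul_assoc, gh_mul_vtx, if_pos rfl]
  · rw [mul_zero]

lemma z_mul_ee {z : E.CL K t} (hzc : z ∈ E.clCenter K t) (e : E.Edge) :
    z * (E.cledg K t e * E.clghost K t e) =
      E.cledg K t e * (z * E.clvtx K t (E.r e)) * E.clghost K t e := by
  have hg : E.clvtx K t (E.r e) * E.clghost K t e = E.clghost K t e := by
    rw [vtx_mul_gh, if_pos rfl]
  calc z * (E.cledg K t e * E.clghost K t e)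
      = (z * E.cledg K t e) * E.clghost K t e := (mul_assoc _ _ _).symm
    _ = (E.cledg K t e * z) * E.clghost K t e := by rw [hzc.2 _ (edg_mem e)]
    _ = E.cledg K t e * (z * E.clghost K t e) := mul_assoc _ _ _
    _ = E.cledg K t e * (z * (E.clvtx K t (E.r e) * E.clghost K t e)) := by rw [hg]
    _ = E.cledg K t e * ((z * E.clvtx K t (E.r e)) * E.clghost K t e) := by
        rw [mul_assoc]
    _ = E.cledg K t e * (z * E.clvtx K t (E.r e)) * E.clghost K t e :=
        (mul_assoc _ _ _).symm

lemma z_vtx_decomp (hrow : ∀ v : E.V, {e : E.Edge | E.s e = v}.Finite)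
    {z : E.CL K t} (hzc : z ∈ E.clCenter K t) (v : E.V) :
    ∃ c : K, z * E.clvtx K t v = c • qElem K t E v (hrow v) +
      ∑ e ∈ (hrow v).toFinset, E.cledg K t e * (z * E.clvtx K t (E.r e)) *
        E.clghost K t e := by
  obtain ⟨c, hc⟩ := exists_q_scalar hzc (hrow v)
  refine ⟨c, ?_⟩
  have hdecomp : E.clvtx K t v = qElem K t E v (hrow v) +
      ∑ e ∈ (hrow v).toFinset, E.cledg K t e * E.clghost K t e := by
    rw [qElem, sub_add_cancel]
  conv_lhs => rw [hdecomp]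
  rw [mul_add, hc, Finset.mul_sum]
  congr 1
  exact Finset.sum_congr rfl (fun e _ => z_mul_ee hzc e)

variable (K t) in
def famSet (E : DirGraph) (hrow : ∀ v : E.V, {e : E.Edge | E.s e = v}.Finite) (N : ℕ) :
    Set (E.CL K t) :=
  {x | ∃ (u y : E.V) (l : List E.Edge), E.IsPathFrom u y l ∧ l.length ≤ N ∧
    (x = E.clPath K t u l * E.clPathStar K t u l ∨
     x = E.clPath K t u l * qElem K t E y (hrow y) * E.clPathStar K t u l)}

lemma fam_conj {hrow : ∀ v : E.V, {e : E.Edge | E.s e = v}.Finite} {N : ℕ} (e : E.Edge)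
    {x : E.CL K t} (hx : x ∈ famSet K t E hrow N) :
    E.cledg K t e * x * E.clghost K t e ∈
      Submodule.span K (famSet K t E hrow (N + 1)) := by
  obtain ⟨u, y, l, hl, hlen, hx1 | hx2⟩ := hx
  · subst hx1
    have h1 : E.cledg K t e * (E.clPath K t u l * E.clPathStar K t u l) *
        E.clghost K t e =
        (E.cledg K t e * E.clPath K t u l) *
          (E.clPathStar K t u l * E.clghost K t e) := by
      simp only [mul_assoc]
    rw [h1, edg_mul_clPath, clPathStar_mul_gh]
    split_ifs with h
    · exact Submodule.subset_span ⟨E.s e, y, e :: l, ⟨rfl, h ▸ hl⟩,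
        by simpa using hlen, Or.inl rfl⟩
    · rw [zero_mul]
      exact zero_mem _
  · subst hx2
    have h1 : E.cledg K t e * (E.clPath K t u l * qElem K t E y (hrow y) *
        E.clPathStar K t u l) * E.clghost K t e =
        (E.cledg K t e * E.clPath K t u l) * qElem K t E y (hrow y) *
          (E.clPathStar K t u l * E.clghost K t e) := by
      simp only [mul_assoc]
    rw [h1, edg_mul_clPath, clPathStar_mul_gh]
    split_ifs with h
    · exact Submodule.subset_span ⟨E.s e, y, e :: l, ⟨rfl, h ▸ hl⟩,
        by simpa using hlen, Or.inr rfl⟩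
    · rw [zero_mul, zero_mul]
      exact zero_mem _

lemma isPathFrom_drop {u y : E.V} {l : List E.Edge} (h : E.IsPathFrom u y l) :
    ∀ (i : ℕ) (hi : i < l.length), E.IsPathFrom (E.s (l.get ⟨i, hi⟩)) y (l.drop i) := by
  induction l generalizing u with
  | nil => intro i hi; simp at hi
  | cons e l' ih =>
    intro i hi
    cases i with
    | zero => exact ⟨rfl, h.2⟩
    | succ i => simpa using ih h.2 i (by simpa using hi)


section MainInd

variable [Fintype E.V]

set_option maxHeartbeats 1000000 in
lemma main_induction (hrow : ∀ v : E.V, {e : E.Edge | E.s e = v}.Finite)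
    {z : E.CL K t} (hzc : z ∈ E.clCenter K t) (hz0 : z ∈ E.clDeg0 K t) (v : E.V) :
    z * E.clvtx K t v ∈
      Submodule.span K (famSet K t E hrow (Fintype.card E.V + 1)) := by
  obtain ⟨n, hdeep⟩ := exists_deep_scalar hzc hz0
  have hvtxfam : ∀ (k : ℕ) (w : E.V), E.clvtx K t w ∈ famSet K t E hrow k := by
    intro k w
    refine ⟨w, w, [], rfl, Nat.zero_le _, Or.inl ?_⟩
    rw [clPath_nil, clPathStar_nil, vtx_mul_vtx, if_pos rfl]
  have hqfam : ∀ (k : ℕ) (w : E.V), qElem K t E w (hrow w) ∈ famSet K t E hrow k := by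
    intro k w
    refine ⟨w, w, [], rfl, Nat.zero_le _, Or.inr ?_⟩
    rw [clPath_nil, clPathStar_nil, vtx_mul_q, if_pos rfl, q_mul_vtx, if_pos rfl]
  have H : ∀ k : ℕ, ∀ v : E.V,
      (∀ (y : E.V) (l : List E.Edge), E.IsPathFrom v y l →
        (∀ x ∈ v :: l.map E.s, ¬ ∃ (x₀ : E.V) (g : List E.Edge),
          E.IsPathFrom x₀ x g ∧ n ≤ g.length) → l.length < k) →
      z * E.clvtx K t v ∈ Submodule.span K (famSet K t E hrow k) := by
    intro k
    induction k with
    | zero =>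
      intro v hSB
      by_cases hd : ∃ (x₀ : E.V) (g : List E.Edge), E.IsPathFrom x₀ v g ∧ n ≤ g.length
      · obtain ⟨x₀, g, hg, hglen⟩ := hd
        obtain ⟨c, hc⟩ := hdeep x₀ v g hg hglen
        rw [hc]
        exact Submodule.smul_mem _ _ (Submodule.subset_span (hvtxfam 0 v))
      · refine absurd (hSB v [] rfl ?_) (by simp)
        intro x hx
        simp only [List.map_nil, List.mem_cons, List.not_mem_nil, or_false] at hx
        subst hx
        exact hd
    | succ k ih =>
      intro v hSB
      by_cases hd : ∃ (x₀ : E.V) (g : List E.Edge), E.IsPathFrom x₀ v g ∧ n ≤ g.length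
      · obtain ⟨x₀, g, hg, hglen⟩ := hd
        obtain ⟨c, hc⟩ := hdeep x₀ v g hg hglen
        rw [hc]
        exact Submodule.smul_mem _ _ (Submodule.subset_span (hvtxfam _ v))
      · obtain ⟨c, hdec⟩ := z_vtx_decomp hrow hzc v
        rw [hdec]
        refine add_mem (Submodule.smul_mem _ _ (Submodule.subset_span (hqfam _ v)))
          (sum_mem fun e he => ?_)
        have he' : E.s e = v := (hrow v).mem_toFinset.mp he
        have hre : z * E.clvtx K t (E.r e) ∈
            Submodule.span K (famSet K t E hrow k) := by
          apply ih (E.r e)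
          intro y l hl hall
          have hcond : ∀ x ∈ v :: (e :: l).map E.s,
              ¬ ∃ (x₀ : E.V) (g : List E.Edge),
                E.IsPathFrom x₀ x g ∧ n ≤ g.length := by
            intro x hx
            simp only [List.map_cons, List.mem_cons] at hx
            rcases hx with rfl | rfl | hx
            · exact hd
            · rw [he']; exact hd
            · exact hall x (List.mem_cons_of_mem _ hx)
          have hlen := hSB y (e :: l) ⟨he', hl⟩ hcond
          simp only [List.length_cons] at hlen
          omega
        refine Submodule.span_induction (p := fun w _ =>
          E.cledg K t e * w * E.clghost K t e ∈
            Submodule.span K (famSet K t E hrow (k + 1))) ?_ ?_ ?_ ?_ hre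
        · intro w hw; exact fam_conj e hw
        · show E.cledg K t e * 0 * E.clghost K t e ∈ _
          rw [mul_zero, zero_mul]; exact zero_mem _
        · intro a b _ _ ha hb
          show E.cledg K t e * (a + b) * E.clghost K t e ∈ _
          rw [mul_add, add_mul]; exact add_mem ha hb
        · intro r a _ ha
          show E.cledg K t e * (r • a) * E.clghost K t e ∈ _
          rw [mul_smul_comm, smul_mul_assoc]; exact Submodule.smul_mem _ _ ha
  apply H (Fintype.card E.V + 1) v
  intro y l hl hall
  by_contra hlong
  push_neg at hlong
  have key : ∀ (i j : Fin l.length), i.1 < j.1 →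
      E.s (l.get i) = E.s (l.get j) → False := by
    intro i j hlt hs
    have hdi := isPathFrom_drop hl i.1 i.2
    have hsplit := (List.take_append_drop (j.1 - i.1) (l.drop i.1)).symm
    rw [hsplit] at hdi
    obtain ⟨w, hseg, hrest⟩ := isPathFrom_split hdi
    have hdd : (l.drop i.1).drop (j.1 - i.1) = l.drop j.1 := by
      rw [List.drop_drop]
      congr 1
      omega
    rw [hdd] at hrest
    have hcons : l.get j :: l.drop (j.1 + 1) = l.drop j.1 := List.getElem_cons_drop j.2
    rw [← hcons] at hrest
    have hw : E.s (l.get j) = w := hrest.1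
    have hwx : w = E.s (l.get ⟨i.1, i.2⟩) := by
      rw [← hw, ← hs]
    rw [hwx] at hseg
    have hpos : 0 < ((l.drop i.1).take (j.1 - i.1)).length := by
      rw [List.length_take, List.length_drop]
      exact lt_min (by omega) (by have := j.2; omega)
    have pump : ∀ m : ℕ, ∃ gg : List E.Edge,
        E.IsPathFrom (E.s (l.get ⟨i.1, i.2⟩)) (E.s (l.get ⟨i.1, i.2⟩)) gg ∧
        gg.length = m * ((l.drop i.1).take (j.1 - i.1)).length := by
      intro m
      induction m with
      | zero => exact ⟨[], rfl, by simp⟩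
      | succ m ihm =>
        obtain ⟨gg, hgg, hlen2⟩ := ihm
        refine ⟨(l.drop i.1).take (j.1 - i.1) ++ gg, isPathFrom_append hseg hgg, ?_⟩
        rw [List.length_append, hlen2]
        ring
    obtain ⟨gg, hgg, hgglen⟩ := pump n
    refine hall (E.s (l.get ⟨i.1, i.2⟩)) ?_ ⟨_, gg, hgg, ?_⟩
    · exact List.mem_cons_of_mem _ (List.mem_map_of_mem (f := E.s) (List.get_mem l ⟨i.1, i.2⟩))
    · rw [hgglen]
      exact Nat.le_mul_of_pos_right n hpos
  obtain ⟨i, j, hij, hfeq⟩ := Fintype.exists_ne_map_eq_of_card_lt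
    (fun i : Fin l.length => E.s (l.get i)) (by simpa using (by omega : Fintype.card E.V < l.length))
  rcases lt_or_gt_of_ne (Fin.val_ne_of_ne hij) with h | h
  · exact key i j h hfeq
  · exact key j i h hfeq.symm

end MainInd

end Dev

end DirGraph

set_option maxHeartbeats 1000000 in
/-- Let `E` be a finite row-finite graph and `A = C_K(E)` (`t = false`)
or `L_K(E)` (`t = true`).  If `A` is prime then `Z(A)₀ = K·1`; moreover (for any such `E`)
the degree-zero part `Z(A)₀` of the center is finite-dimensional over `K`. -/
theorem stmt18 (K : Type) [Field K] (E : DirGraph) [Finite E.V]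
    (hrow : ∀ v : E.V, {e : E.Edge | E.s e = v}.Finite) (t : Bool) :
    (IsPrimeSet (E.clSub K t : Set (E.CL K t)) →
      {z : E.CL K t | z ∈ E.clCenter K t ∧ z ∈ E.clDeg0 K t} =
        Set.range fun k : K => k • E.clOne K t) ∧
    (∃ (n : ℕ) (f : Fin n → E.CL K t),
      ∀ z ∈ E.clCenter K t, z ∈ E.clDeg0 K t → z ∈ Submodule.span K (Set.range f)) := by
  haveI : Fintype E.V := Fintype.ofFinite E.V
  constructor
  · intro hprime
    exact DirGraph.prime_case hprime
  · set N := Fintype.card E.V + 1 with hN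
    have hEdgeFin : Finite E.Edge := by
      have h1 : (Set.univ : Set E.Edge).Finite := by
        have h2 := Set.Finite.biUnion (Set.finite_univ : (Set.univ : Set E.V).Finite)
          (fun v _ => hrow v)
        refine h2.subset ?_
        intro e _
        exact Set.mem_biUnion (Set.mem_univ (E.s e)) rfl
      exact Set.finite_univ_iff.mp h1
    have hlists : {l : List E.Edge | l.length ≤ N}.Finite := List.finite_length_le _ N
    have hfam : (DirGraph.famSet K t E hrow N).Finite := by
      have hsub : DirGraph.famSet K t E hrow N ⊆
          ((fun p : (E.V × E.V) × List E.Edge =>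
            E.clPath K t p.1.1 p.2 * E.clPathStar K t p.1.1 p.2) ''
            (Set.univ ×ˢ {l : List E.Edge | l.length ≤ N})) ∪
          ((fun p : (E.V × E.V) × List E.Edge =>
            E.clPath K t p.1.1 p.2 * DirGraph.qElem K t E p.1.2 (hrow p.1.2) *
              E.clPathStar K t p.1.1 p.2) ''
            (Set.univ ×ˢ {l : List E.Edge | l.length ≤ N})) := by
        rintro x ⟨u, y, l, hl, hlen, hx1 | hx2⟩
        · exact Or.inl ⟨((u, y), l), ⟨Set.mem_univ _, hlen⟩, hx1.symm⟩
        · exact Or.inr ⟨((u, y), l), ⟨Set.mem_univ _, hlen⟩, hx2.symm⟩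
      exact Set.Finite.subset
        (Set.Finite.union
          (Set.Finite.image _ (Set.Finite.prod Set.finite_univ hlists))
          (Set.Finite.image _ (Set.Finite.prod Set.finite_univ hlists))) hsub
    obtain ⟨n, f, hf⟩ : ∃ (n : ℕ) (f : Fin n → E.CL K t),
        DirGraph.famSet K t E hrow N = Set.range f := by
      refine ⟨hfam.toFinset.card,
        fun i => ((hfam.toFinset.equivFin.symm i : hfam.toFinset) : E.CL K t), ?_⟩
      ext x
      constructor
      · intro hx
        exact ⟨hfam.toFinset.equivFin ⟨x, hfam.mem_toFinset.mpr hx⟩, by simp⟩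
      · rintro ⟨i, rfl⟩
        exact hfam.mem_toFinset.mp (hfam.toFinset.equivFin.symm i).2
    refine ⟨n, f, fun z hzc hz0 => ?_⟩
    have hsum : (∑ u : E.V, z * E.clvtx K t u) ∈
        Submodule.span K (DirGraph.famSet K t E hrow N) :=
      sum_mem (fun u _ => DirGraph.main_induction hrow hzc hz0 u)
    have hz1 : (∑ u : E.V, z * E.clvtx K t u) = z := by
      rw [← Finset.mul_sum, ← DirGraph.clOne_eq, (DirGraph.mul_clOne hzc.1).1]
    rw [← hf]
    rw [← hz1]
    exact hsum
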